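/- Let S ⊆ S' be saturated multiplicatively closed subsets of R and T = S^{-1}S'. Suppose S is M-splitting, S' \ Ann(M) is compactly S-atomic (as a subset of the R-module R), and S ∩ Z(M) = S ∩ Z(R) = ∅. Let α be one of: irreducible, strongly irreducible, very strongly irreducible, and β one of: primitive, strongly primitive, very strongly primitive. Then M is (α, β)-S'-atomic if and only if M is (α, primitive)-S-atomic and the localized R_S-module M_S is (α, β)-T-atomic. -/

import Mathlib

namespace FactorizationPaper

variable {R : Type*} [CommRing R]

/-- `S` is a saturated multiplicatively closed subset of `R`:
it contains `1`, is closed under multiplication, and `x*y ∈ S` implies `x ∈ S` and `y ∈ S`. -/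
def Saturated (S : Set R) : Prop :=
  1 ∈ S ∧ (∀ x ∈ S, ∀ y ∈ S, x * y ∈ S) ∧ ∀ x y : R, x * y ∈ S → x ∈ S ∧ y ∈ S

/-- The submonoid of `R` associated to a saturated multiplicatively closed set. -/
def Saturated.submonoid {S : Set R} (hS : Saturated S) : Submonoid R where
  carrier := S
  one_mem' := hS.1
  mul_mem' := fun {a b} ha hb => hS.2.1 a ha b hb

section ElementDefs

variable (S : Set R) {N : Type*} [AddCommGroup N] [Module R N]

/-- `m ∼^S n` : `m` and `n` are S-associates. -/
def SAssoc (m n : N) : Prop := (∃ s ∈ S, m = s • n) ∧ (∃ s ∈ S, n = s • m)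

/-- `m ≈^S n` : `m` and `n` are S-strong associates. -/
def SStrongAssoc (m n : N) : Prop := ∃ u : R, IsUnit u ∧ u ∈ S ∧ m = u • n

/-- `m ≅^S n` : `m` and `n` are S-very strong associates. -/
def SVeryStrongAssoc (m n : N) : Prop :=
  SAssoc S m n ∧ ((m = 0 ∧ n = 0) ∨ ∀ s ∈ S, m = s • n → IsUnit s)

/-- `m` is S-primitive. -/
def SPrimitive (m : N) : Prop := ∀ s ∈ S, ∀ n : N, m = s • n → SAssoc S n m

/-- `m` is S-strongly primitive. -/
def SStronglyPrimitive (m : N) : Prop := ∀ s ∈ S, ∀ n : N, m = s • n → SStrongAssoc S n m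

/-- `m` is S-very strongly primitive. -/
def SVeryStronglyPrimitive (m : N) : Prop := ∀ s ∈ S, ∀ n : N, m = s • n → SVeryStrongAssoc S n m

/-- the three kinds of S-primitivity, indexed by `Fin 3` :
`0` = primitive, `1` = strongly primitive, `2` = very strongly primitive. -/
def PrimOf (k : Fin 3) (m : N) : Prop :=
  match k with
  | 0 => SPrimitive S m
  | 1 => SStronglyPrimitive S m
  | 2 => SVeryStronglyPrimitive S m

/-- `m = s • n` is a compact S-atomic factorization of `m`. -/
def IsCompactFactorization (m : N) (s : R) (n : N) : Prop :=
  s ∈ S ∧ SPrimitive S n ∧ m = s • n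

/-- `m = s₁ ⋯ s_k • n` (with the `sᵢ` the members of the list `l`, nonunits in `S`)
is an S-factorization of `m`, of length `l.length`. -/
def IsSFactorization (m : N) (l : List R) (n : N) : Prop :=
  (∀ s ∈ l, s ∈ S ∧ ¬ IsUnit s) ∧ m = l.prod • n

end ElementDefs

/-- `a ∼ b` : associates in `R` (i.e. S-associates with `S = R`, in `R` as an `R`-module). -/
def Assoc (a b : R) : Prop := SAssoc (Set.univ : Set R) a b

/-- `a ≈ b` : strong associates in `R`. -/
def StrongAssoc (a b : R) : Prop := SStrongAssoc (Set.univ : Set R) a b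

/-- `a ≅ b` : very strong associates in `R`. -/
def VeryStrongAssoc (a b : R) : Prop := SVeryStrongAssoc (Set.univ : Set R) a b

/-- `a` is irreducible. -/
def Irred (a : R) : Prop := ¬ IsUnit a ∧ ∀ b c : R, a = b * c → Assoc a b ∨ Assoc a c

/-- `a` is strongly irreducible. -/
def StrongIrred (a : R) : Prop :=
  ¬ IsUnit a ∧ ∀ b c : R, a = b * c → StrongAssoc a b ∨ StrongAssoc a c

/-- `a` is very strongly irreducible. -/
def VeryStrongIrred (a : R) : Prop :=
  ¬ IsUnit a ∧ ∀ b c : R, a = b * c → VeryStrongAssoc a b ∨ VeryStrongAssoc a c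

/-- the three kinds of irreducibility, indexed by `Fin 3` :
`0` = irreducible, `1` = strongly irreducible, `2` = very strongly irreducible. -/
def IrredOf (k : Fin 3) (a : R) : Prop :=
  match k with
  | 0 => Irred a
  | 1 => StrongIrred a
  | 2 => VeryStrongIrred a

section ElementDefs2

variable (S : Set R) {N : Type*} [AddCommGroup N] [Module R N]

/-- `m = s₁ ⋯ s_k • n` is an S-atomic factorization
(each `sᵢ` irreducible and in `S`, `n` S-primitive). -/
def IsSAtomicFactorization (m : N) (l : List R) (n : N) : Prop :=
  IsSFactorization S m l n ∧ (∀ s ∈ l, Irred s) ∧ SPrimitive S n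

/-- an (α, β)-S-factorization: each `sᵢ` is α (a kind of irreducible)
and `n` is S-β (a kind of S-primitive). -/
def IsABFactorization (kα kβ : Fin 3) (m : N) (l : List R) (n : N) : Prop :=
  IsSFactorization S m l n ∧ (∀ s ∈ l, IrredOf kα s) ∧ PrimOf S kβ n

/-- Isomorphism of S-atomic factorizations: same length, S-associate primitive parts,
and the irreducible parts match up to permutation and associates. -/
def FactorIso (l : List R) (n : N) (l' : List R) (n' : N) : Prop :=
  l.length = l'.length ∧ SAssoc S n n' ∧
    ∃ l'' : List R, l'.Perm l'' ∧ List.Forall₂ Assoc l l''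

end ElementDefs2

section SetDefs

variable (S : Set R) {N : Type*} [AddCommGroup N] [Module R N]

/-- `E ⊆ N` is compactly S-atomic. -/
def CompactlySAtomic (E : Set N) : Prop :=
  ∀ m ∈ E, m ≠ 0 → ∃ s n, IsCompactFactorization S m s n

/-- `E ⊆ N` is semi-S-factorable. -/
def SemiSFactorable (E : Set N) : Prop :=
  CompactlySAtomic S E ∧ ∀ m ∈ E, m ≠ 0 → ∀ s n s' n',
    IsCompactFactorization S m s n → IsCompactFactorization S m s' n' → Assoc s s'

/-- `E ⊆ N` is S-factorable. -/
def SFactorable (E : Set N) : Prop :=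
  SemiSFactorable S E ∧ ∀ m ∈ E, m ≠ 0 → ∀ s n s' n',
    IsCompactFactorization S m s n → IsCompactFactorization S m s' n' → SAssoc S n n'

/-- `S` splits `E ⊆ N`. -/
def Splits (E : Set N) : Prop :=
  SemiSFactorable S E ∧
    ∀ r : R, SPrimitive S r → ∀ m : N, SPrimitive S m →
      r • m ≠ 0 → r • m ∈ E → SPrimitive S (r • m)

end SetDefs

/-- The set of zero divisors of the module `M` in `R`. -/
def ZDiv (R : Type*) [CommRing R] (M : Type*) [AddCommGroup M] [Module R M] : Set R :=
  {r : R | ∃ m : M, m ≠ 0 ∧ r • m = 0}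

/-- The annihilator of `M` in `R`, as a set. -/
def AnnSet (R : Type*) [CommRing R] (M : Type*) [AddCommGroup M] [Module R M] : Set R :=
  {r : R | ∀ m : M, r • m = 0}

/-- The annihilator of `M` in `R`, as an ideal. -/
def AnnIdeal (R : Type*) [CommRing R] (M : Type*) [AddCommGroup M] [Module R M] : Ideal R where
  carrier := AnnSet R M
  zero_mem' := fun m => zero_smul R m
  add_mem' := fun {a b} ha hb m => by
    rw [add_smul, ha m, hb m, add_zero]
  smul_mem' := fun c x hx m => by
    rw [smul_eq_mul, mul_smul, hx m, smul_zero]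

section ModuleProps

variable (S : Set R) (N : Type*) [AddCommGroup N] [Module R N]

/-- `N` is S-présimplifiable. -/
def SPresimplifiable : Prop := ∀ s ∈ S, ∀ m : N, s • m = m → IsUnit s ∨ m = 0

/-- `N` is S-atomic. -/
def SAtomicModule : Prop := ∀ m : N, m ≠ 0 → ∃ l n, IsSAtomicFactorization S m l n

/-- `N` is (α, β)-S-atomic. -/
def ABAtomicModule (kα kβ : Fin 3) : Prop :=
  ∀ m : N, m ≠ 0 → ∃ l n, IsABFactorization S kα kβ m l n

/-- `N` is an S-UFM. -/
def SUFM : Prop := SAtomicModule S N ∧ ∀ m : N, m ≠ 0 → ∀ l n l' n',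
  IsSAtomicFactorization S m l n → IsSAtomicFactorization S m l' n' → FactorIso S l n l' n'

/-- `N` is an S-FFM. -/
def SFFM : Prop := SAtomicModule S N ∧ ∀ m : N, m ≠ 0 →
  ∃ Fs : Set (List R × N), Fs.Finite ∧
    ∀ l n, IsSAtomicFactorization S m l n → ∃ p ∈ Fs, FactorIso S l n p.1 p.2

/-- `N` is an S-BFM. -/
def SBFM : Prop := ∀ m : N, m ≠ 0 → ∃ B : ℕ,
  ∀ l n, IsSFactorization S m l n → l.length ≤ B

/-- `N` is an S-HFM. -/
def SHFM : Prop := SAtomicModule S N ∧ ∀ m : N, m ≠ 0 → ∀ l n l' n',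
  IsSAtomicFactorization S m l n → IsSAtomicFactorization S m l' n' → l.length = l'.length

end ModuleProps

section InE

variable (E : Set R)

/-- `R` is présimplifiable in `E`. -/
def PresimpIn : Prop := ∀ a ∈ E, a ≠ 0 → ¬ IsUnit a → ∀ r : R, a = r * a → IsUnit r ∨ a = 0

/-- `R` is atomic in `E`. -/
def AtomicIn : Prop := ∀ a ∈ E, a ≠ 0 → ¬ IsUnit a →
  ∃ l n, IsSAtomicFactorization (Set.univ : Set R) a l n

/-- `R` has unique factorization in `E`. -/
def UFIn : Prop := AtomicIn E ∧ ∀ a ∈ E, a ≠ 0 → ¬ IsUnit a → ∀ l n l' n',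
  IsSAtomicFactorization (Set.univ : Set R) a l n →
  IsSAtomicFactorization (Set.univ : Set R) a l' n' →
  FactorIso (Set.univ : Set R) l n l' n'

/-- `R` has finite factorization in `E`. -/
def FFIn : Prop := AtomicIn E ∧ ∀ a ∈ E, a ≠ 0 → ¬ IsUnit a →
  ∃ Fs : Set (List R × R), Fs.Finite ∧ ∀ l n,
    IsSAtomicFactorization (Set.univ : Set R) a l n →
      ∃ p ∈ Fs, FactorIso (Set.univ : Set R) l n p.1 p.2

/-- `R` is half factorial in `E`. -/
def HFIn : Prop := AtomicIn E ∧ ∀ a ∈ E, a ≠ 0 → ¬ IsUnit a → ∀ l n l' n',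
  IsSAtomicFactorization (Set.univ : Set R) a l n →
  IsSAtomicFactorization (Set.univ : Set R) a l' n' → l.length = l'.length

/-- `R` has bounded factorization in `E`. -/
def BFIn : Prop := ∀ a ∈ E, a ≠ 0 → ¬ IsUnit a →
  ∃ B : ℕ, ∀ l n, IsSFactorization (Set.univ : Set R) a l n → l.length ≤ B

end InE

/-- The set `T = S⁻¹S'` in the localization `R_S`. -/
def locT {S : Set R} (hS : Saturated S) (S' : Set R) : Set (Localization hS.submonoid) :=
  {x | ∃ s' ∈ S', ∃ t : hS.submonoid, x = Localization.mk s' t}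

section DomainDefs

variable (D : Type*) [CommRing D]

/-- two lists of ring elements agree up to order and associates. -/
def ListAssociated (l l' : List D) : Prop :=
  ∃ l'' : List D, l'.Perm l'' ∧ List.Forall₂ Associated l l''

/-- `D` is atomic: every nonzero nonunit is a finite product of irreducibles. -/
def DomAtomic : Prop := ∀ x : D, x ≠ 0 → ¬ IsUnit x →
  ∃ l : List D, (∀ a ∈ l, Irreducible a) ∧ x = l.prod

/-- `D` is a bounded factorization domain. -/
def DomBFD : Prop := ∀ x : D, x ≠ 0 → ¬ IsUnit x →
  ∃ B : ℕ, ∀ l : List D, (∀ a ∈ l, ¬ IsUnit a) → x = l.prod → l.length ≤ B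

/-- `D` is a half factorial domain. -/
def DomHFD : Prop := DomAtomic D ∧ ∀ x : D, x ≠ 0 → ¬ IsUnit x →
  ∀ l l' : List D, (∀ a ∈ l, Irreducible a) → x = l.prod →
    (∀ a ∈ l', Irreducible a) → x = l'.prod → l.length = l'.length

/-- `D` is a finite factorization domain. -/
def DomFFD : Prop := DomAtomic D ∧ ∀ x : D, x ≠ 0 → ¬ IsUnit x →
  ∃ Fs : Set (List D), Fs.Finite ∧ ∀ l : List D, (∀ a ∈ l, Irreducible a) → x = l.prod →
    ∃ l' ∈ Fs, ListAssociated D l l'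

/-- `D` is a unique factorization domain. -/
def DomUFD : Prop := DomAtomic D ∧ ∀ x : D, x ≠ 0 → ¬ IsUnit x →
  ∀ l l' : List D, (∀ a ∈ l, Irreducible a) → x = l.prod →
    (∀ a ∈ l', Irreducible a) → x = l'.prod → ListAssociated D l l'

end DomainDefs

section AXBXdefs

variable (B : Type*) [CommRing B] (A : Subring B)

/-- The ring `R = A + X·B[X]`, as a subring of `B[X]`. -/
def AXBX : Subring (Polynomial B) where
  carrier := {f | f.coeff 0 ∈ A}
  zero_mem' := by simp only [Set.mem_setOf_eq, Polynomial.coeff_zero]; exact zero_mem A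
  one_mem' := by
    simp only [Set.mem_setOf_eq, Polynomial.coeff_one, if_pos rfl]
    exact one_mem A
  add_mem' := fun {f g} hf hg => by
    simp only [Set.mem_setOf_eq, Polynomial.coeff_add] at *
    exact add_mem hf hg
  neg_mem' := fun {f} hf => by
    simp only [Set.mem_setOf_eq, Polynomial.coeff_neg] at *
    exact neg_mem hf
  mul_mem' := fun {f g} hf hg => by
    simp only [Set.mem_setOf_eq, Polynomial.mul_coeff_zero] at *
    exact mul_mem hf hg

/-- The saturated multiplicatively closed subset `S = (U(B) ∩ A) ∪ {u·Xⁿ : u ∈ U(B), n ≥ 1}`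
of `R = A + X·B[X]`. -/
def Sset : Set (AXBX B A) :=
  {f | (∃ u : B, IsUnit u ∧ u ∈ A ∧ (f : Polynomial B) = Polynomial.C u) ∨
       (∃ u : B, IsUnit u ∧ ∃ n : ℕ, 1 ≤ n ∧
          (f : Polynomial B) = Polynomial.C u * Polynomial.X ^ n)}

/-- The saturated multiplicatively closed subset `S₀ = U(B) ∩ A` of `A`. -/
def S0set : Set A := {a : A | IsUnit (a : B)}

end AXBXdefs



section Statement10Aux

variable {R : Type*} [CommRing R] {M : Type*} [AddCommGroup M] [Module R M]

/-- Bundle of all standing hypotheses of the theorem. -/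
structure Hyp (S S' : Set R) (M : Type*) [AddCommGroup M] [Module R M] : Prop where
  satS : Saturated S
  satS' : Saturated S'
  sub : S ⊆ S'
  split : Splits S (Set.univ : Set M)
  compact : CompactlySAtomic S (S' \ AnnSet R M)
  zm : S ∩ ZDiv R M = ∅
  zr : S ∩ ZDiv R R = ∅

namespace Hyp

variable {S S' : Set R} (H : Hyp S S' M)
include H

/-- units belong to a saturated set -/
theorem unit_mem {u : R} (hu : IsUnit u) : u ∈ S := by
  obtain ⟨v, hv⟩ := hu.exists_right_inv
  exact (H.satS.2.2 u v (hv ▸ H.satS.1)).1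

theorem unit_mem' {u : R} (hu : IsUnit u) : u ∈ S' := H.sub (H.unit_mem hu)

theorem one_mem : (1 : R) ∈ S := H.satS.1

theorem mulS {a b : R} (ha : a ∈ S) (hb : b ∈ S) : a * b ∈ S := H.satS.2.1 a ha b hb

theorem mulS' {a b : R} (ha : a ∈ S') (hb : b ∈ S') : a * b ∈ S' := H.satS'.2.1 a ha b hb

theorem satl {a b : R} (h : a * b ∈ S) : a ∈ S := (H.satS.2.2 a b h).1
theorem satr {a b : R} (h : a * b ∈ S) : b ∈ S := (H.satS.2.2 a b h).2
theorem satl' {a b : R} (h : a * b ∈ S') : a ∈ S' := (H.satS'.2.2 a b h).1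
theorem satr' {a b : R} (h : a * b ∈ S') : b ∈ S' := (H.satS'.2.2 a b h).2

/-- regularity of S on R -/
theorem rreg {A x y : R} (hA : A ∈ S) (h : A * x = A * y) : x = y := by
  by_contra hxy
  have h0 : A * (x - y) = 0 := by rw [mul_sub, h, sub_self]
  have : A ∈ S ∩ ZDiv R R := ⟨hA, ⟨x - y, sub_ne_zero.2 hxy, by rw [smul_eq_mul]; exact h0⟩⟩
  rw [H.zr] at this; exact this

theorem rreg0 {A x : R} (hA : A ∈ S) (h : A * x = 0) : x = 0 := by
  have := H.rreg hA (h.trans (mul_zero A).symm)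
  exact this

/-- regularity of S on M -/
theorem mreg {A : R} {x y : M} (hA : A ∈ S) (h : A • x = A • y) : x = y := by
  by_contra hxy
  have h0 : A • (x - y) = 0 := by rw [smul_sub, h, sub_self]
  have : A ∈ S ∩ ZDiv R M := ⟨hA, ⟨x - y, sub_ne_zero.2 hxy, h0⟩⟩
  rw [H.zm] at this; exact this

theorem mreg0 {A : R} {x : M} (hA : A ∈ S) (h : A • x = 0) : x = 0 := by
  have := H.mreg hA (h.trans (smul_zero A).symm); exact this

theorem smul_ne {A : R} {x : M} (hA : A ∈ S) (hx : x ≠ 0) : A • x ≠ 0 :=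
  fun h => hx (H.mreg0 hA h)

/-- Ann facts -/
theorem zero_ann : (0 : R) ∈ AnnSet R M := fun m => zero_smul R m

theorem mul_ann_left {b c : R} (hb : b ∈ AnnSet R M) : b * c ∈ AnnSet R M := fun m => by
  rw [mul_comm, mul_smul, hb m, smul_zero]

theorem mul_ann_right {b c : R} (hc : c ∈ AnnSet R M) : b * c ∈ AnnSet R M := fun m => by
  rw [mul_smul, hc m, smul_zero]

theorem not_ann_left {b c : R} (h : b * c ∉ AnnSet R M) : b ∉ AnnSet R M :=
  fun hb => h (H.mul_ann_left hb)

theorem not_ann_right {b c : R} (h : b * c ∉ AnnSet R M) : c ∉ AnnSet R M :=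
  fun hc => h (H.mul_ann_right hc)

/-- splitting components -/
theorem h1 {m : M} (hm : m ≠ 0) : ∃ s ∈ S, ∃ n : M, SPrimitive S n ∧ m = s • n := by
  obtain ⟨s, n, hs, hn, he⟩ := H.split.1.1 m (Set.mem_univ m) hm
  exact ⟨s, hs, n, hn, he⟩

theorem h3 {r : R} {m : M} (hr : SPrimitive S r) (hm : SPrimitive S m) (h0 : r • m ≠ 0) :
    SPrimitive S (r • m) := H.split.2 r hr m hm h0 (Set.mem_univ _)

/-- uniqueness engine: two compact factorizations of the same nonzero element -/
theorem engine {z : M} (hz : z ≠ 0) {A B : R} {n n' : M} (hA : A ∈ S) (hB : B ∈ S)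
    (hn : SPrimitive S n) (hn' : SPrimitive S n') (e1 : z = A • n) (e2 : z = B • n') :
    ∃ u : R, IsUnit u ∧ B = u * A ∧ n = u • n' := by
  have hassoc := H.split.1.2 z (Set.mem_univ z) hz A n B n' ⟨hA, hn, e1⟩ ⟨hB, hn', e2⟩
  obtain ⟨⟨r, -, hr⟩, ⟨r', -, hr'⟩⟩ := hassoc
  rw [smul_eq_mul] at hr hr'
  have hA1 : A * 1 = A * (r' * r) := by
    rw [mul_one]
    calc A = r * B := hr
    _ = r * (r' * A) := by rw [← hr']
    _ = A * (r' * r) := by ring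
  have hrr : (1 : R) = r' * r := H.rreg hA hA1
  have hu : IsUnit r' := IsUnit.of_mul_eq_one (a := r') r hrr.symm
  refine ⟨r', hu, hr', ?_⟩
  have : A • n = (r' * A) • n' := by rw [e1.symm, e2, hr']
  rw [mul_comm, mul_smul] at this
  exact H.mreg hA this

/-- existence of a primitive witness for a non-annihilating scalar -/
theorem primY {r : R} (hr : r ∉ AnnSet R M) : ∃ y : M, SPrimitive S y ∧ r • y ≠ 0 := by
  have : ∃ m : M, r • m ≠ 0 := by
    by_contra h; push_neg at h; exact hr fun m => h m
  obtain ⟨m₀, hm₀⟩ := this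
  have hm0 : m₀ ≠ 0 := fun h => hm₀ (by rw [h, smul_zero])
  obtain ⟨e, he, y, hy, hey⟩ := H.h1 hm0
  refine ⟨y, hy, fun h0 => hm₀ ?_⟩
  rw [hey, smul_comm, h0, smul_zero]

/-- E1 : a scalar from S acting with a primitive nonzero result is a unit -/
theorem e1 {P : M} (hP : SPrimitive S P) (hP0 : P ≠ 0) {e : R} (he : e ∈ S) {W : M}
    (hW : P = e • W) : IsUnit e := by
  have hW0 : W ≠ 0 := fun h => hP0 (by rw [hW, h, smul_zero])
  obtain ⟨g, hg, u₀, hu₀, hgu⟩ := H.h1 hW0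
  have hPe : P = (e * g) • u₀ := by rw [hW, hgu, mul_smul]
  obtain ⟨u, hu, hBu, -⟩ :=
    H.engine hP0 H.one_mem (H.mulS he hg) hP hu₀ (one_smul R P).symm hPe
  rw [mul_one] at hBu
  exact isUnit_of_mul_isUnit_left (hBu ▸ hu)

/-- compact factorization from hcompact -/
theorem compactD {a : R} (ha : a ∈ S') (hann : a ∉ AnnSet R M) :
    ∃ t ∈ S, ∃ q : R, SPrimitive S q ∧ a = t * q := by
  have ha0 : a ≠ 0 := fun h => hann (h ▸ H.zero_ann)
  obtain ⟨s, n, hs, hn, he⟩ := H.compact a ⟨ha, hann⟩ ha0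
  exact ⟨s, hs, n, hn, by rw [he, smul_eq_mul]⟩

/-- E2 : decompose a mixed factorization against a compact one -/
theorem e2 {z : M} (hz : z ≠ 0) {A G : R} {n Q : M} (hA : A ∈ S) (hG : G ∈ S')
    (hn : SPrimitive S n) (hQ : SPrimitive S Q) (ez : z = A • n) (ez' : z = G • Q) :
    ∃ u q : R, IsUnit u ∧ SPrimitive S q ∧ q ∈ S' ∧ G = (u * A) * q ∧ n = (u * q) • Q := by
  have hGann : G ∉ AnnSet R M := fun h => hz (by rw [ez', h Q])
  obtain ⟨s, hs, q, hq, hGe⟩ := H.compactD hG hGann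
  have hqS' : q ∈ S' := H.satr' (hGe ▸ hG)
  have hqQ0 : q • Q ≠ 0 := by
    intro h
    apply hz
    rw [ez', hGe, mul_smul, h, smul_zero]
  have hqQ : SPrimitive S (q • Q) := H.h3 hq hQ hqQ0
  have ez'' : z = s • (q • Q) := by rw [ez', hGe, mul_smul]
  obtain ⟨u, hu, hsu, hnu⟩ := H.engine hz hA hs hn hqQ ez ez''
  exact ⟨u, q, hu, hq, hqS', by rw [hGe, hsu], by rw [hnu, mul_smul]⟩


end Hyp

section Generic

set_option linter.unusedSectionVars false

variable {A : Type*} [CommRing A] {N : Type*} [AddCommGroup N] [Module A N]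

theorem isUnit_inv_pair {u : A} (hu : IsUnit u) : ∃ v : A, u * v = 1 ∧ v * u = 1 ∧ IsUnit v := by
  obtain ⟨w, hw⟩ := hu.exists_right_inv
  exact ⟨w, hw, by rwa [mul_comm] at hw, IsUnit.of_mul_eq_one (a := w) u (by rwa [mul_comm] at hw)⟩

/-- unit action preserves S-primitivity (for sets closed under mult and containing units) -/
theorem sprim_unit_smul {S₁ : Set A} (hmul : ∀ x ∈ S₁, ∀ y ∈ S₁, x * y ∈ S₁)
    (hun : ∀ v : A, IsUnit v → v ∈ S₁) {u : A} (huu : IsUnit u) {p : N}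
    (hp : SPrimitive S₁ p) : SPrimitive S₁ (u • p) := by
  obtain ⟨v, huv, hvu, hv⟩ := isUnit_inv_pair huu
  intro s hs n h
  have hpu : p = (v * s) • n := by
    rw [mul_smul, ← h, smul_smul, hvu, one_smul]
  obtain ⟨⟨σ, hσ, h1⟩, ⟨τ, hτ, h2⟩⟩ := hp (v * s) (hmul _ (hun _ hv) _ hs) n hpu
  refine ⟨⟨σ * v, hmul _ hσ _ (hun _ hv), ?_⟩, ⟨u * τ, hmul _ (hun _ huu) _ hτ, ?_⟩⟩
  · rw [smul_smul, mul_assoc, hvu, mul_one]; exact h1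
  · rw [mul_smul, ← h2]

theorem sstrongprim_unit_smul {S₁ : Set A} (hmul : ∀ x ∈ S₁, ∀ y ∈ S₁, x * y ∈ S₁)
    (hun : ∀ v : A, IsUnit v → v ∈ S₁) {u : A} (huu : IsUnit u) {p : N}
    (hp : SStronglyPrimitive S₁ p) : SStronglyPrimitive S₁ (u • p) := by
  obtain ⟨v, huv, hvu, hv⟩ := isUnit_inv_pair huu
  intro s hs n h
  have hpu : p = (v * s) • n := by
    rw [mul_smul, ← h, smul_smul, hvu, one_smul]
  obtain ⟨U, hU, hUS, h1⟩ := hp (v * s) (hmul _ (hun _ hv) _ hs) n hpu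
  refine ⟨U * v, hU.mul hv, hun _ (hU.mul hv), ?_⟩
  rw [smul_smul, mul_assoc, hvu, mul_one]; exact h1

theorem svstrongprim_unit_smul {S₁ : Set A} (hmul : ∀ x ∈ S₁, ∀ y ∈ S₁, x * y ∈ S₁)
    (hun : ∀ v : A, IsUnit v → v ∈ S₁) {u : A} (huu : IsUnit u) {p : N}
    (hp : SVeryStronglyPrimitive S₁ p) : SVeryStronglyPrimitive S₁ (u • p) := by
  obtain ⟨v, huv, hvu, hv⟩ := isUnit_inv_pair huu
  intro s hs n h
  have hpu : p = (v * s) • n := by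
    rw [mul_smul, ← h, smul_smul, hvu, one_smul]
  obtain ⟨⟨⟨σ, hσ, h1⟩, ⟨τ, hτ, h2⟩⟩, hrest⟩ :=
    hp (v * s) (hmul _ (hun _ hv) _ hs) n hpu
  constructor
  · refine ⟨⟨σ * v, hmul _ hσ _ (hun _ hv), ?_⟩, ⟨u * τ, hmul _ (hun _ huu) _ hτ, ?_⟩⟩
    · rw [smul_smul, mul_assoc, hvu, mul_one]; exact h1
    · rw [mul_smul, ← h2]
  · rcases hrest with ⟨hn0, hp0⟩ | hr
    · exact Or.inl ⟨hn0, by rw [hp0, smul_zero]⟩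
    · refine Or.inr fun σ hσ hn => ?_
      have : n = (σ * u) • p := by rw [hn, smul_smul]
      have := hr (σ * u) (hmul _ hσ _ (hun _ huu)) this
      exact isUnit_of_mul_isUnit_left this

theorem primOf_unit_smul {S₁ : Set A} (hmul : ∀ x ∈ S₁, ∀ y ∈ S₁, x * y ∈ S₁)
    (hun : ∀ v : A, IsUnit v → v ∈ S₁) {u : A} (huu : IsUnit u) {p : N} (k : Fin 3)
    (hp : PrimOf S₁ k p) : PrimOf S₁ k (u • p) := by
  fin_cases k
  · exact sprim_unit_smul hmul hun huu hp
  · exact sstrongprim_unit_smul hmul hun huu hp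
  · exact svstrongprim_unit_smul hmul hun huu hp

/-- flavored associates imply plain associates (in a commutative ring, S = univ) -/
theorem strongAssoc_assoc {a b : A} (h : StrongAssoc a b) : Assoc a b := by
  obtain ⟨u, hu, -, he⟩ := h
  obtain ⟨v, huv, hvu, hv⟩ := isUnit_inv_pair hu
  exact ⟨⟨u, Set.mem_univ u, he⟩,
    ⟨v, Set.mem_univ v, by rw [he, smul_smul, hvu, one_smul]⟩⟩

theorem irredOf_factor_assoc {a b c : A} (k : Fin 3) (h : IrredOf k a) (hbc : a = b * c) :
    Assoc a b ∨ Assoc a c := by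
  fin_cases k
  · exact h.2 b c hbc
  · rcases h.2 b c hbc with h' | h'
    · exact Or.inl (strongAssoc_assoc h')
    · exact Or.inr (strongAssoc_assoc h')
  · rcases h.2 b c hbc with h' | h'
    · exact Or.inl h'.1
    · exact Or.inr h'.1

theorem irredOf_nonunit {a : A} {k : Fin 3} (h : IrredOf k a) : ¬ IsUnit a := by
  fin_cases k <;> exact h.1

/-- irreducibility is stable under unit multiplication -/
theorem irredOf_unit_mul {u a : A} (hu : IsUnit u) (k : Fin 3) (h : IrredOf k a) :
    IrredOf k (u * a) := by
  obtain ⟨v, huv, hvu, hv⟩ := isUnit_inv_pair hu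
  have hva : a = v * (u * a) := by rw [← mul_assoc, hvu, one_mul]
  have hnon : ¬ IsUnit (u * a) := fun hun => (irredOf_nonunit h) (hva ▸ hv.mul hun)
  have key : ∀ b c : A, u * a = b * c → a = (v * b) * c := by
    intro b c hbc
    rw [hva, hbc, mul_assoc]
  fin_cases k
  · refine ⟨hnon, fun b c hbc => ?_⟩
    rcases h.2 _ _ (key b c hbc) with ⟨⟨s, -, h1⟩, ⟨s', -, h2⟩⟩ | hc
    · refine Or.inl ⟨⟨s, Set.mem_univ s, ?_⟩, ⟨s', Set.mem_univ s', ?_⟩⟩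
      · rw [smul_eq_mul] at h1 ⊢
        calc u * a = u * (s * (v * b)) := by rw [← h1]
        _ = (u * v) * (s * b) := by ring
        _ = s * b := by rw [huv, one_mul]
      · rw [smul_eq_mul] at h2 ⊢
        calc b = (u * v) * b := by rw [huv, one_mul]
        _ = u * (v * b) := by ring
        _ = u * (s' * a) := by rw [h2]
        _ = s' * (u * a) := by ring
    · obtain ⟨⟨s, -, h1⟩, ⟨s', -, h2⟩⟩ := hc
      refine Or.inr ⟨⟨u * s, Set.mem_univ _, ?_⟩, ⟨s' * v, Set.mem_univ _, ?_⟩⟩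
      · rw [smul_eq_mul] at h1 ⊢; rw [mul_assoc, ← h1]
      · rw [smul_eq_mul] at h2 ⊢
        calc c = s' * a := h2
        _ = s' * (v * (u * a)) := by rw [← hva]
        _ = s' * v * (u * a) := by ring
  · refine ⟨hnon, fun b c hbc => ?_⟩
    rcases h.2 _ _ (key b c hbc) with ⟨w, hw, -, h1⟩ | ⟨w, hw, -, h1⟩
    · refine Or.inl ⟨w, hw, Set.mem_univ w, ?_⟩
      rw [smul_eq_mul] at h1 ⊢
      calc u * a = u * (w * (v * b)) := by rw [← h1]
      _ = (u * v) * (w * b) := by ring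
      _ = w * b := by rw [huv, one_mul]
    · refine Or.inr ⟨u * w, hu.mul hw, Set.mem_univ _, ?_⟩
      rw [smul_eq_mul] at h1 ⊢; rw [mul_assoc, ← h1]
  · refine ⟨hnon, fun b c hbc => ?_⟩
    rcases h.2 _ _ (key b c hbc) with ⟨⟨⟨s, -, h1⟩, ⟨s', -, h2⟩⟩, hrest⟩ |
      ⟨⟨⟨s, -, h1⟩, ⟨s', -, h2⟩⟩, hrest⟩
    · refine Or.inl ⟨⟨⟨s, Set.mem_univ s, ?_⟩, ⟨s', Set.mem_univ s', ?_⟩⟩, ?_⟩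
      · rw [smul_eq_mul] at h1 ⊢
        calc u * a = u * (s * (v * b)) := by rw [← h1]
        _ = (u * v) * (s * b) := by ring
        _ = s * b := by rw [huv, one_mul]
      · rw [smul_eq_mul] at h2 ⊢
        calc b = (u * v) * b := by rw [huv, one_mul]
        _ = u * (v * b) := by ring
        _ = u * (s' * a) := by rw [h2]
        _ = s' * (u * a) := by ring
      · rcases hrest with ⟨ha0, hb0⟩ | hr
        · refine Or.inl ⟨by rw [ha0, mul_zero], ?_⟩
          have hb : b = u * (v * b) := by rw [← mul_assoc, huv, one_mul]
          rw [hb, hb0, mul_zero]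
        · refine Or.inr fun σ hσ hn => ?_
          have : a = σ • (v * b) := by
            rw [smul_eq_mul] at hn ⊢
            calc a = v * (u * a) := hva
            _ = v * (σ * b) := by rw [hn]
            _ = σ * (v * b) := by ring
          exact hr σ (Set.mem_univ σ) this
    · refine Or.inr ⟨⟨⟨u * s, Set.mem_univ _, ?_⟩, ⟨s' * v, Set.mem_univ _, ?_⟩⟩, ?_⟩
      · rw [smul_eq_mul] at h1 ⊢; rw [mul_assoc, ← h1]
      · rw [smul_eq_mul] at h2 ⊢
        calc c = s' * a := h2
        _ = s' * (v * (u * a)) := by rw [← hva]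
        _ = s' * v * (u * a) := by ring
      · rcases hrest with ⟨ha0, hc0⟩ | hr
        · exact Or.inl ⟨by rw [ha0, mul_zero], hc0⟩
        · refine Or.inr fun σ hσ hn => ?_
          have hσ' : a = (v * σ) • c := by
            rw [smul_eq_mul] at hn ⊢
            calc a = v * (u * a) := hva
            _ = v * (σ * c) := by rw [hn]
            _ = (v * σ) * c := by ring
          have hvσ := hr _ (Set.mem_univ _) hσ'
          have : IsUnit (u * (v * σ)) := hu.mul hvσ
          rwa [← mul_assoc, huv, one_mul] at this

end Generic

namespace Hyp

set_option linter.unusedSectionVars false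

variable {S S' : Set R} (H : Hyp S S' M)
include H

theorem loc_surj (x : Localization H.satS.submonoid) :
    ∃ (a : R) (t : H.satS.submonoid), x = Localization.mk a t :=
  Localization.induction_on x fun p => ⟨p.1, p.2, rfl⟩

theorem lm_surj (x : LocalizedModule H.satS.submonoid M) :
    ∃ (m : M) (t : H.satS.submonoid), x = LocalizedModule.mk m t :=
  LocalizedModule.induction_on (fun m s => ⟨m, s, rfl⟩) x

theorem mkR_eq_exists {a b : R} {s t : H.satS.submonoid}
    (h : Localization.mk a s = Localization.mk b t) :
    ∃ c ∈ S, (c * ↑t) * a = (c * ↑s) * b := by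
  obtain ⟨c, hc⟩ := Localization.r_iff_exists.1 (Localization.mk_eq_mk_iff.1 h)
  exact ⟨↑c, c.2, by rw [mul_assoc, mul_assoc]; exact hc⟩

theorem mkM_eq_exists {m m' : M} {s s' : H.satS.submonoid}
    (h : LocalizedModule.mk m s = LocalizedModule.mk m' s') :
    ∃ c ∈ S, (c * ↑s') • m = (c * ↑s) • m' := by
  obtain ⟨u, hu⟩ := LocalizedModule.mk_eq.1 h
  refine ⟨↑u, u.2, ?_⟩
  rw [Submonoid.smul_def, Submonoid.smul_def, Submonoid.smul_def, Submonoid.smul_def,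
    smul_smul, smul_smul] at hu
  exact hu

theorem mkR_zero {a : R} {s : H.satS.submonoid} (h : Localization.mk a s = 0) : a = 0 := by
  rw [← Localization.mk_zero s] at h
  obtain ⟨c, hc, he⟩ := H.mkR_eq_exists h
  rw [mul_zero] at he
  exact H.rreg0 (H.mulS hc s.2) he

theorem mkM_zero {m : M} {s : H.satS.submonoid} (h : LocalizedModule.mk m s = 0) : m = 0 := by
  rw [← LocalizedModule.zero_mk s] at h
  obtain ⟨c, hc, he⟩ := H.mkM_eq_exists h
  rw [smul_zero] at he
  exact H.mreg0 (H.mulS hc s.2) he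

theorem unit_mk {a : R} {t : H.satS.submonoid} :
    IsUnit (Localization.mk a t) ↔ a ∈ S := by
  constructor
  · intro hx
    obtain ⟨y, hy⟩ := hx.exists_right_inv
    obtain ⟨b, d, rfl⟩ := H.loc_surj y
    rw [Localization.mk_mul, ← Localization.mk_one] at hy
    obtain ⟨c, hc, he⟩ := H.mkR_eq_exists hy
    push_cast at he
    rw [mul_one, mul_one] at he
    have h1 : (c * a) * b ∈ S := by
      rw [mul_assoc, he]
      exact H.mulS hc (t * d).2
    exact H.satr (H.satl h1)
  · intro ha
    apply IsUnit.of_mul_eq_one (Localization.mk (↑t : R) ⟨a, ha⟩)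
    rw [Localization.mk_mul, ← Localization.mk_one, Localization.mk_eq_mk_iff,
      Localization.r_iff_exists]
    exact ⟨1, by push_cast; ring⟩

theorem mk_mem_locT {a : R} (ha : a ∈ S') (t : H.satS.submonoid) :
    Localization.mk a t ∈ locT H.satS S' := ⟨a, ha, t, rfl⟩

theorem locT_rep {X : Localization H.satS.submonoid} (h : X ∈ locT H.satS S') :
    ∃ a ∈ S', ∃ t : H.satS.submonoid, X = Localization.mk a t := h

theorem locT_mul {x y : Localization H.satS.submonoid}
    (hx : x ∈ locT H.satS S') (hy : y ∈ locT H.satS S') : x * y ∈ locT H.satS S' := by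
  obtain ⟨a, ha, t, rfl⟩ := hx
  obtain ⟨b, hb, d, rfl⟩ := hy
  rw [Localization.mk_mul]
  exact H.mk_mem_locT (H.mulS' ha hb) _

theorem unit_mem_locT {x : Localization H.satS.submonoid} (hx : IsUnit x) :
    x ∈ locT H.satS S' := by
  obtain ⟨a, t, rfl⟩ := H.loc_surj x
  exact H.mk_mem_locT (H.sub ((H.unit_mk).1 hx)) t

/-- Lemma D : factors of a primitive element of S' \ Ann are primitive. -/
theorem lemmaD {p : R} (hp : SPrimitive S p) (hpS' : p ∈ S') (hpann : p ∉ AnnSet R M)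
    {b c : R} (hbc : p = b * c) :
    SPrimitive S b ∧ b ∈ S' ∧ b ∉ AnnSet R M := by
  have hbS' : b ∈ S' := H.satl' (hbc ▸ hpS')
  have hbann : b ∉ AnnSet R M := H.not_ann_left (hbc ▸ hpann)
  have hcS' : c ∈ S' := H.satr' (hbc ▸ hpS')
  have hcann : c ∉ AnnSet R M := H.not_ann_right (hbc ▸ hpann)
  obtain ⟨sb, hsb, pb, hpb, heb⟩ := H.compactD hbS' hbann
  obtain ⟨sc, hsc, pc, hpc, hec⟩ := H.compactD hcS' hcann
  obtain ⟨y, hy, hpy⟩ := H.primY hpann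
  have hz : p • y ≠ 0 := hpy
  have hpyprim : SPrimitive S (p • y) := H.h3 hp hy hpy
  have hez' : p • y = (sb * sc) • (pb • (pc • y)) := by
    rw [hbc, heb, hec, smul_smul, smul_smul]
    congr 1
    ring
  have hpcy0 : pc • y ≠ 0 := by
    intro h0
    apply hz
    rw [hez', h0, smul_zero, smul_zero]
  have hpbpcy0 : pb • (pc • y) ≠ 0 := by
    intro h0
    apply hz
    rw [hez', h0, smul_zero]
  have hn' : SPrimitive S (pb • (pc • y)) := H.h3 hpb (H.h3 hpc hy hpcy0) hpbpcy0
  obtain ⟨u, hu, hBu, -⟩ := H.engine hz H.one_mem (H.mulS hsb hsc) hpyprim hn'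
    (one_smul R (p • y)).symm hez'
  rw [mul_one] at hBu
  have hsbu : IsUnit sb := isUnit_of_mul_isUnit_left (hBu ▸ hu)
  have := sprim_unit_smul H.satS.2.1 (fun v hv => H.unit_mem hv) hsbu hpb
  rw [smul_eq_mul, ← heb] at this
  exact ⟨this, hbS', hbann⟩

/-- Lemma DIV : divisibility descent. -/
theorem lemmaDIV {b p : R} (hb : SPrimitive S b) (hbS' : b ∈ S') (hbann : b ∉ AnnSet R M)
    (hp : SPrimitive S p) {A B : R} (hA : A ∈ S) (hE : A * b = B * p) :
    ∃ D : R, b = D * p := by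
  have hAbann : A * b ∉ AnnSet R M := by
    intro h
    exact hbann fun m => H.mreg0 hA (by rw [← mul_smul]; exact h m)
  have hAbS' : A * b ∈ S' := H.mulS' (H.sub hA) hbS'
  have hBS' : B ∈ S' := H.satl' (hE ▸ hAbS')
  obtain ⟨y, hy, hz⟩ := H.primY hAbann
  have hez : (A * b) • y = A • (b • y) := by rw [mul_smul]
  have hby0 : b • y ≠ 0 := by intro h0; apply hz; rw [hez, h0, smul_zero]
  have hez' : (A * b) • y = B • (p • y) := by rw [hE, mul_smul]
  have hpy0 : p • y ≠ 0 := by intro h0; apply hz; rw [hez', h0, smul_zero]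
  obtain ⟨u, q, hu, hq, hqS', hGe, -⟩ :=
    H.e2 hz hA hBS' (H.h3 hb hy hby0) (H.h3 hp hy hpy0) hez hez'
  refine ⟨u * q, H.rreg hA ?_⟩
  rw [hE, hGe]; ring

/-- Lemma E : an irreducible element of S' \ (S ∪ Ann) is a unit times an S-primitive. -/
theorem lemmaE {a : R} (haS' : a ∈ S') (hann : a ∉ AnnSet R M) (haS : a ∉ S) {k : Fin 3}
    (hirr : IrredOf k a) :
    ∃ t q : R, IsUnit t ∧ a = t * q ∧ SPrimitive S q ∧ q ∈ S' ∧ q ∉ S ∧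
      q ∉ AnnSet R M ∧ ¬ IsUnit q ∧ IrredOf k q := by
  obtain ⟨t, ht, q, hq, hE⟩ := H.compactD haS' hann
  have hqS' : q ∈ S' := H.satr' (hE ▸ haS')
  have hqS : q ∉ S := fun h => haS (hE ▸ H.mulS ht h)
  have hqann : q ∉ AnnSet R M := fun h => hann (hE ▸ H.mul_ann_right h)
  rcases irredOf_factor_assoc k hirr hE with hat | haq
  · exfalso
    obtain ⟨-, ⟨r', -, h2⟩⟩ := hat
    rw [smul_eq_mul] at h2
    exact haS (H.satr (h2 ▸ ht))
  · obtain ⟨-, ⟨E, -, h2⟩⟩ := haq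
    rw [smul_eq_mul] at h2
    obtain ⟨y, hy, hqy⟩ := H.primY hqann
    have hP : SPrimitive S (q • y) := H.h3 hq hy hqy
    have hPe : q • y = t • ((E * q) • y) := by
      conv_lhs => rw [h2, hE]
      rw [smul_smul]
      congr 1
      ring
    have htu : IsUnit t := H.e1 hP hqy ht hPe
    obtain ⟨w, htw, hwt, hwu⟩ := isUnit_inv_pair htu
    have hqwa : q = w * a := by
      rw [hE, ← mul_assoc, hwt, one_mul]
    have hirrq : IrredOf k q := by
      rw [hqwa]; exact irredOf_unit_mul hwu k hirr
    exact ⟨t, q, htu, hE, hq, hqS', hqS, hqann, fun h => hqS (H.unit_mem h), hirrq⟩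

/-- any flavor of S'-primitivity implies S-primitivity -/
theorem prim_of_beta {n : M} (hn0 : n ≠ 0) {k : Fin 3} (h : PrimOf S' k n) :
    SPrimitive S n := by
  obtain ⟨e, he, w, hw, hew⟩ := H.h1 hn0
  have hw0 : w ≠ 0 := fun h0 => hn0 (by rw [hew, h0, smul_zero])
  have hσ' : ∃ σ' ∈ S', w = σ' • n := by
    fin_cases k
    · obtain ⟨⟨σ', hσ', h1'⟩, -⟩ := h e (H.sub he) w hew
      exact ⟨σ', hσ', h1'⟩
    · obtain ⟨U, hU, hUS', h1'⟩ := h e (H.sub he) w hew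
      exact ⟨U, hUS', h1'⟩
    · obtain ⟨⟨⟨σ', hσ', h1'⟩, -⟩, -⟩ := h e (H.sub he) w hew
      exact ⟨σ', hσ', h1'⟩
  obtain ⟨σ', hσ', h1'⟩ := hσ'
  have hwe : w = e • (σ' • w) := by
    rw [smul_smul, mul_comm, ← smul_smul, ← hew, ← h1']
  have heu : IsUnit e := H.e1 hw hw0 he hwe
  have := sprim_unit_smul H.satS.2.1 (fun v hv => H.unit_mem hv) heu hw
  rwa [← hew] at this

/-- product of a list of S-primitive ring elements acting on a primitive module element -/
theorem prodPrim {lp : List R} (h : ∀ p ∈ lp, SPrimitive S p) {v : M} (hv : SPrimitive S v)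
    (h0 : lp.prod • v ≠ 0) : SPrimitive S (lp.prod • v) := by
  induction lp with
  | nil => simpa using hv
  | cons p lp ih =>
    rw [List.prod_cons, mul_smul] at h0 ⊢
    have hlv0 : lp.prod • v ≠ 0 := fun hh => h0 (by rw [hh, smul_zero])
    exact H.h3 (h p (List.mem_cons_self (a := p) (l := lp))) (ih (fun r hr => h r (List.mem_cons_of_mem p hr)) hlv0) h0

theorem mk_mul_one {a b : R} :
    Localization.mk a (1 : H.satS.submonoid) * Localization.mk b 1 = Localization.mk (a * b) 1 := by
  rw [Localization.mk_mul, mul_one]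

theorem mk_scale {c : R} (hc : c ∈ S) (x : R) (σ : H.satS.submonoid) :
    Localization.mk x σ = Localization.mk (c * x) (⟨c, hc⟩ * σ) := by
  rw [Localization.mk_eq_mk_iff, Localization.r_iff_exists]
  exact ⟨1, by push_cast; ring⟩

/-- key engine : from `A*p = G*q` with `p, q` primitive, extract the compact structure of `G`. -/
theorem keydiv {p q A G : R} (hA : A ∈ S) (hp : SPrimitive S p) (hpann : p ∉ AnnSet R M)
    (hpS' : p ∈ S') (hq : SPrimitive S q) (hE : A * p = G * q) :
    ∃ u₃ q₃ : R, IsUnit u₃ ∧ SPrimitive S q₃ ∧ q₃ ∈ S' ∧ G = (u₃ * A) * q₃ ∧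
      p = u₃ * (q₃ * q) := by
  have hApann : A * p ∉ AnnSet R M := by
    intro h
    exact hpann fun m => H.mreg0 hA (by rw [← mul_smul]; exact h m)
  have hApS' : A * p ∈ S' := H.mulS' (H.sub hA) hpS'
  have hGS' : G ∈ S' := H.satl' (hE ▸ hApS')
  obtain ⟨y, hy, hz⟩ := H.primY hApann
  have ez : (A * p) • y = A • (p • y) := by rw [mul_smul]
  have hpy0 : p • y ≠ 0 := by intro h0; apply hz; rw [ez, h0, smul_zero]
  have ez' : (A * p) • y = G • (q • y) := by rw [hE, mul_smul]
  have hqy0 : q • y ≠ 0 := by intro h0; apply hz; rw [ez', h0, smul_zero]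
  obtain ⟨u₃, q₃, hu₃, hq₃, hq₃S', hGe, -⟩ :=
    H.e2 hz hA hGS' (H.h3 hp hy hpy0) (H.h3 hq hy hqy0) ez ez'
  refine ⟨u₃, q₃, hu₃, hq₃, hq₃S', hGe, H.rreg hA ?_⟩
  rw [hE, hGe]; ring

/-- extraction of a ring relation from division in the localization -/
theorem extract_div {b p : R}
    (h : ∃ η : Localization H.satS.submonoid,
      Localization.mk b 1 = η * Localization.mk p 1) :
    ∃ A ∈ S, ∃ B : R, A * b = B * p := by
  obtain ⟨η, hη⟩ := h
  obtain ⟨B₀, A₀, rfl⟩ := H.loc_surj η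
  rw [Localization.mk_mul] at hη
  obtain ⟨c, hc, he⟩ := H.mkR_eq_exists hη
  push_cast at he
  refine ⟨c * ↑A₀, H.mulS hc A₀.2, c * B₀, by linear_combination he⟩

/-- very strong associate criterion : `p = σ * q → IsUnit σ` descends through localization -/
theorem ascent_vsa_core {p q : R} (hp : SPrimitive S p) (hpann : p ∉ AnnSet R M)
    (hpS' : p ∈ S') (hq : SPrimitive S q)
    (hallq : ∀ σ : R, p = σ * q → IsUnit σ)
    {X V : Localization H.satS.submonoid} {vnum : R} {vden : H.satS.submonoid}
    (hVrep : V = Localization.mk vnum vden) (hvnumS : vnum ∈ S)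
    (hX : X = V * Localization.mk q 1) :
    ∀ Ξ : Localization H.satS.submonoid, Localization.mk p 1 = Ξ * X → IsUnit Ξ := by
  intro Ξ hΞ
  obtain ⟨g, δ, rfl⟩ := H.loc_surj Ξ
  have hmk : Localization.mk p (1 : H.satS.submonoid) =
      Localization.mk ((g * vnum) * q) ((δ * vden) * 1) := by
    rw [hΞ, hX, hVrep, Localization.mk_mul, Localization.mk_mul]
    congr 1
    · ring
    · rw [mul_assoc]
  obtain ⟨c₁, hc₁, he₁⟩ := H.mkR_eq_exists hmk
  push_cast at he₁
  have hE₂ : (c₁ * (↑δ * ↑vden)) * p = (c₁ * (g * vnum)) * q := by linear_combination he₁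
  have hA₂ : c₁ * (↑δ * ↑vden) ∈ S := H.mulS hc₁ (H.mulS δ.2 vden.2)
  obtain ⟨u₃, q₃, hu₃, hq₃, -, hGe, hpe⟩ := H.keydiv hA₂ hp hpann hpS' hq hE₂
  have hq₃u : IsUnit q₃ := by
    have := hallq (u₃ * q₃) (by rw [hpe]; ring)
    exact isUnit_of_mul_isUnit_right this
  have hG₂S : c₁ * (g * vnum) ∈ S := by
    rw [hGe]
    exact H.mulS (H.mulS (H.unit_mem hu₃) hA₂) (H.unit_mem hq₃u)
  exact (H.unit_mk).2 (H.satl (H.satr hG₂S))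

/-- associates transfer up to the localization -/
theorem ascent_assoc {p q : R} {X V : Localization H.satS.submonoid}
    (hVu : IsUnit V) (hX : X = V * Localization.mk q 1)
    {α β : R} (hα : p = α * q) (hβ : q = β * p) :
    Assoc (Localization.mk p (1 : H.satS.submonoid)) X := by
  obtain ⟨Vi, hVVi, hViV, hViu⟩ := isUnit_inv_pair hVu
  constructor
  · refine ⟨Localization.mk α 1 * Vi, Set.mem_univ _, ?_⟩
    rw [smul_eq_mul, hX]
    symm
    calc Localization.mk α 1 * Vi * (V * Localization.mk q 1)
        = (Vi * V) * (Localization.mk α 1 * Localization.mk q 1) := by ring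
    _ = Localization.mk α 1 * Localization.mk q 1 := by rw [hViV, one_mul]
    _ = Localization.mk (α * q) 1 := H.mk_mul_one
    _ = Localization.mk p 1 := by rw [← hα]
  · refine ⟨V * Localization.mk β 1, Set.mem_univ _, ?_⟩
    rw [smul_eq_mul, hX]
    symm
    calc V * Localization.mk β 1 * Localization.mk p 1
        = V * (Localization.mk β 1 * Localization.mk p 1) := by ring
    _ = V * Localization.mk (β * p) 1 := by rw [H.mk_mul_one]
    _ = V * Localization.mk q 1 := by rw [← hβ]

theorem ascent_strong {p q : R} {X V : Localization H.satS.submonoid}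
    (hVu : IsUnit V) (hX : X = V * Localization.mk q 1)
    {v : R} (hv : IsUnit v) (hα : p = v * q) :
    StrongAssoc (Localization.mk p (1 : H.satS.submonoid)) X := by
  obtain ⟨Vi, hVVi, hViV, hViu⟩ := isUnit_inv_pair hVu
  refine ⟨Localization.mk v 1 * Vi, ((H.unit_mk).2 (H.unit_mem hv)).mul hViu, Set.mem_univ _, ?_⟩
  rw [smul_eq_mul, hX]
  symm
  calc Localization.mk v 1 * Vi * (V * Localization.mk q 1)
      = (Vi * V) * (Localization.mk v 1 * Localization.mk q 1) := by ring
  _ = Localization.mk v 1 * Localization.mk q 1 := by rw [hViV, one_mul]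
  _ = Localization.mk (v * q) 1 := H.mk_mul_one
  _ = Localization.mk p 1 := by rw [← hα]

/-- IRREDUCIBILITY DESCENT -/
theorem irr_descent {p : R} (hp : SPrimitive S p) (hpS' : p ∈ S') (hpann : p ∉ AnnSet R M)
    {k : Fin 3} (hirr : IrredOf k (Localization.mk p (1 : H.satS.submonoid))) :
    IrredOf k p := by
  have hnon : ¬ IsUnit p := fun h => (irredOf_nonunit hirr) ((H.unit_mk).2 (H.unit_mem h))
  have hp0 : p ≠ 0 := fun h => hpann (h ▸ H.zero_ann)
  have core0 : ∀ b c : R, p = b * c →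
      (∃ η : Localization H.satS.submonoid,
        Localization.mk b 1 = η * Localization.mk p 1) → Assoc p b := by
    intro b c hbc hex
    obtain ⟨hbprim, hbS', hbann⟩ := H.lemmaD hp hpS' hpann hbc
    obtain ⟨A, hA, B, hE⟩ := H.extract_div hex
    obtain ⟨D, hD⟩ := H.lemmaDIV hbprim hbS' hbann hp hA hE
    exact ⟨⟨c, Set.mem_univ c, by rw [smul_eq_mul, mul_comm, ← hbc]⟩,
      ⟨D, Set.mem_univ D, by rw [smul_eq_mul]; exact hD⟩⟩
  have core1 : ∀ b c : R, p = b * c →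
      (∃ U : Localization H.satS.submonoid, IsUnit U ∧
        Localization.mk p 1 = U * Localization.mk b 1) → StrongAssoc p b := by
    intro b c hbc hex
    obtain ⟨hbprim, hbS', hbann⟩ := H.lemmaD hp hpS' hpann hbc
    obtain ⟨U, hUu, hU⟩ := hex
    obtain ⟨U₀, V₀, rfl⟩ := H.loc_surj U
    have hU₀ : U₀ ∈ S := (H.unit_mk).1 hUu
    rw [Localization.mk_mul] at hU
    obtain ⟨c₀, hc₀, he⟩ := H.mkR_eq_exists hU
    push_cast at he
    have hE : (c₀ * ↑V₀) * p = (c₀ * U₀) * b := by linear_combination he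
    have hA₁ : c₀ * ↑V₀ ∈ S := H.mulS hc₀ V₀.2
    have hB₁ : c₀ * U₀ ∈ S := H.mulS hc₀ hU₀
    obtain ⟨y, hy, hpy⟩ := H.primY hpann
    have hz0 : (c₀ * ↑V₀) • (p • y) ≠ 0 := H.smul_ne hA₁ hpy
    have ez' : (c₀ * ↑V₀) • (p • y) = (c₀ * U₀) • (b • y) := by
      rw [smul_smul, smul_smul, hE]
    have hby0 : b • y ≠ 0 := by intro h0; apply hz0; rw [ez', h0, smul_zero]
    obtain ⟨r, hr, hBr, -⟩ := H.engine hz0 hA₁ hB₁ (H.h3 hp hy hpy) (H.h3 hbprim hy hby0)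
      rfl ez'
    have hpb : p = r * b := H.rreg hA₁ (by rw [hE, hBr]; ring)
    exact ⟨r, hr, Set.mem_univ r, by rw [smul_eq_mul]; exact hpb⟩
  have core2 : ∀ b c : R, p = b * c →
      (∀ Ξ : Localization H.satS.submonoid,
        Localization.mk p 1 = Ξ * Localization.mk b 1 → IsUnit Ξ) →
      ∀ σ : R, p = σ * b → IsUnit σ := by
    intro b c hbc hall σ hσ
    have hmk : Localization.mk p (1 : H.satS.submonoid) =
        Localization.mk σ 1 * Localization.mk b 1 := by
      rw [H.mk_mul_one, ← hσ]
    have hσS : σ ∈ S := (H.unit_mk).1 (hall _ hmk)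
    obtain ⟨⟨τ, hτ, hbτ⟩, -⟩ := hp σ hσS b (by rw [smul_eq_mul]; exact hσ)
    obtain ⟨y, hy, hpy⟩ := H.primY hpann
    have hwe : p • y = ((σ * τ) * p) • y := by
      rw [smul_eq_mul] at hbτ
      conv_lhs => rw [hσ, hbτ]
      congr 1
      ring
    have : IsUnit (σ * τ) := H.e1 (H.h3 hp hy hpy) hpy (H.mulS hσS hτ)
      (by rw [mul_smul] at hwe; exact hwe)
    exact isUnit_of_mul_isUnit_left this
  have hsplitmk : ∀ b c : R, p = b * c →
      Localization.mk p (1 : H.satS.submonoid) =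
        Localization.mk b 1 * Localization.mk c 1 := by
    intro b c hbc
    rw [H.mk_mul_one, ← hbc]
  fin_cases k
  · refine ⟨hnon, fun b c hbc => ?_⟩
    rcases hirr.2 _ _ (hsplitmk b c hbc) with hAb | hAc
    · obtain ⟨-, ⟨η, -, hη⟩⟩ := hAb
      rw [smul_eq_mul] at hη
      exact Or.inl (core0 b c hbc ⟨η, hη⟩)
    · obtain ⟨-, ⟨η, -, hη⟩⟩ := hAc
      rw [smul_eq_mul] at hη
      exact Or.inr (core0 c b (by rw [hbc, mul_comm]) ⟨η, hη⟩)
  · refine ⟨hnon, fun b c hbc => ?_⟩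
    rcases hirr.2 _ _ (hsplitmk b c hbc) with ⟨U, hUu, -, hU⟩ | ⟨U, hUu, -, hU⟩
    · rw [smul_eq_mul] at hU
      exact Or.inl (core1 b c hbc ⟨U, hUu, hU⟩)
    · rw [smul_eq_mul] at hU
      exact Or.inr (core1 c b (by rw [hbc, mul_comm]) ⟨U, hUu, hU⟩)
  · refine ⟨hnon, fun b c hbc => ?_⟩
    rcases hirr.2 _ _ (hsplitmk b c hbc) with ⟨hSA, hrest⟩ | ⟨hSA, hrest⟩
    · refine Or.inl ⟨?_, Or.inr ?_⟩
      · obtain ⟨-, ⟨η, -, hη⟩⟩ := hSA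
        rw [smul_eq_mul] at hη
        exact core0 b c hbc ⟨η, hη⟩
      · intro σ hσu hσe
        rw [smul_eq_mul] at hσe
        rcases hrest with ⟨hmk0, -⟩ | hall
        · exact absurd (H.mkR_zero hmk0) hp0
        · exact core2 b c hbc (fun Ξ hΞ => hall Ξ (Set.mem_univ Ξ)
            (by rw [smul_eq_mul]; exact hΞ)) σ hσe
    · refine Or.inr ⟨?_, Or.inr ?_⟩
      · obtain ⟨-, ⟨η, -, hη⟩⟩ := hSA
        rw [smul_eq_mul] at hη
        exact core0 c b (by rw [hbc, mul_comm]) ⟨η, hη⟩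
      · intro σ hσu hσe
        rw [smul_eq_mul] at hσe
        rcases hrest with ⟨hmk0, -⟩ | hall
        · exact absurd (H.mkR_zero hmk0) hp0
        · exact core2 c b (by rw [hbc, mul_comm]) (fun Ξ hΞ => hall Ξ (Set.mem_univ Ξ)
            (by rw [smul_eq_mul]; exact hΞ)) σ hσe

/-- splitting of a localized factorization of an S-primitive element -/
theorem ascent_split {p : R} (hp : SPrimitive S p) (hpS' : p ∈ S') (hpann : p ∉ AnnSet R M)
    {A x₁ yv : R} (hA : A ∈ S) (hE : A * p = x₁ * yv) :
    ∃ u s₁ s₂ q₁ q₂ : R, IsUnit u ∧ s₁ ∈ S ∧ s₂ ∈ S ∧ SPrimitive S q₁ ∧ SPrimitive S q₂ ∧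
      q₁ ∈ S' ∧ q₂ ∈ S' ∧ x₁ = s₁ * q₁ ∧ yv = s₂ * q₂ ∧ p = u * (q₁ * q₂) := by
  have hApann : A * p ∉ AnnSet R M := by
    intro h
    exact hpann fun m => H.mreg0 hA (by rw [← mul_smul]; exact h m)
  have hApS' : A * p ∈ S' := H.mulS' (H.sub hA) hpS'
  have hx₁S' : x₁ ∈ S' := H.satl' (hE ▸ hApS')
  have hyvS' : yv ∈ S' := H.satr' (hE ▸ hApS')
  have hx₁ann : x₁ ∉ AnnSet R M := H.not_ann_left (hE ▸ hApann)
  have hyvann : yv ∉ AnnSet R M := H.not_ann_right (hE ▸ hApann)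
  obtain ⟨s₁, hs₁, q₁, hq₁, he₁⟩ := H.compactD hx₁S' hx₁ann
  obtain ⟨s₂, hs₂, q₂, hq₂, he₂⟩ := H.compactD hyvS' hyvann
  have hq₁S' : q₁ ∈ S' := H.satr' (he₁ ▸ hx₁S')
  have hq₂S' : q₂ ∈ S' := H.satr' (he₂ ▸ hyvS')
  obtain ⟨y₀, hy₀, hz⟩ := H.primY hApann
  have ez : (A * p) • y₀ = A • (p • y₀) := by rw [mul_smul]
  have hpy0 : p • y₀ ≠ 0 := by intro h0; apply hz; rw [ez, h0, smul_zero]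
  have ez' : (A * p) • y₀ = (s₁ * s₂) • (q₁ • (q₂ • y₀)) := by
    rw [hE, he₁, he₂, smul_smul, smul_smul]
    congr 1
    ring
  have hq₂y0 : q₂ • y₀ ≠ 0 := by
    intro h0; apply hz; rw [ez', h0, smul_zero, smul_zero]
  have hq₁q₂y0 : q₁ • (q₂ • y₀) ≠ 0 := by
    intro h0; apply hz; rw [ez', h0, smul_zero]
  obtain ⟨u, hu, hsu, -⟩ := H.engine hz hA (H.mulS hs₁ hs₂) (H.h3 hp hy₀ hpy0)
    (H.h3 hq₁ (H.h3 hq₂ hy₀ hq₂y0) hq₁q₂y0) ez ez'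
  refine ⟨u, s₁, s₂, q₁, q₂, hu, hs₁, hs₂, hq₁, hq₂, hq₁S', hq₂S', he₁, he₂,
    H.rreg hA ?_⟩
  rw [hE, he₁, he₂, show (s₁ * q₁) * (s₂ * q₂) = (s₁ * s₂) * (q₁ * q₂) by ring, hsu]
  ring

/-- IRREDUCIBILITY ASCENT -/
theorem irr_ascent {p : R} (hp : SPrimitive S p) (hpS' : p ∈ S') (hpS : p ∉ S)
    (hpann : p ∉ AnnSet R M) {k : Fin 3} (hirr : IrredOf k p) :
    IrredOf k (Localization.mk p (1 : H.satS.submonoid)) := by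
  have hnon : ¬ IsUnit (Localization.mk p (1 : H.satS.submonoid)) :=
    fun h => hpS ((H.unit_mk).1 h)
  have main : ∀ X Y : Localization H.satS.submonoid,
      Localization.mk p (1 : H.satS.submonoid) = X * Y →
      ∃ (u s₁ s₂ q₁ q₂ : R) (V₁ V₂ : Localization H.satS.submonoid)
        (d₁ d₂ : H.satS.submonoid),
        IsUnit u ∧ s₁ ∈ S ∧ s₂ ∈ S ∧ SPrimitive S q₁ ∧ SPrimitive S q₂ ∧
        q₁ ∈ S' ∧ q₂ ∈ S' ∧ p = u * (q₁ * q₂) ∧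
        V₁ = Localization.mk s₁ d₁ ∧ V₂ = Localization.mk s₂ d₂ ∧
        IsUnit V₁ ∧ IsUnit V₂ ∧
        X = V₁ * Localization.mk q₁ 1 ∧ Y = V₂ * Localization.mk q₂ 1 := by
    intro X Y hXY
    obtain ⟨x, σx, rfl⟩ := H.loc_surj X
    obtain ⟨yv, σy, rfl⟩ := H.loc_surj Y
    rw [Localization.mk_mul] at hXY
    obtain ⟨c₀, hc₀, he⟩ := H.mkR_eq_exists hXY
    push_cast at he
    have hE : (c₀ * (↑σx * ↑σy)) * p = (c₀ * x) * yv := by linear_combination he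
    obtain ⟨u, s₁, s₂, q₁, q₂, hu, hs₁, hs₂, hq₁, hq₂, hq₁S', hq₂S', he₁, he₂, hpe⟩ :=
      H.ascent_split hp hpS' hpann (H.mulS hc₀ (H.mulS σx.2 σy.2)) hE
    refine ⟨u, s₁, s₂, q₁, q₂, Localization.mk s₁ (⟨c₀, hc₀⟩ * σx),
      Localization.mk s₂ σy, ⟨c₀, hc₀⟩ * σx, σy, hu, hs₁, hs₂, hq₁, hq₂, hq₁S', hq₂S',
      hpe, rfl, rfl, (H.unit_mk).2 hs₁, (H.unit_mk).2 hs₂, ?_, ?_⟩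
    · rw [Localization.mk_mul, mul_one, ← he₁, ← H.mk_scale hc₀ x σx]
    · rw [Localization.mk_mul, mul_one, ← he₂]
  fin_cases k
  · refine ⟨hnon, fun X Y hXY => ?_⟩
    obtain ⟨u, s₁, s₂, q₁, q₂, V₁, V₂, d₁, d₂, hu, hs₁, hs₂, hq₁, hq₂, hq₁S', hq₂S',
      hpe, hV₁r, hV₂r, hV₁u, hV₂u, hX, hY⟩ := main X Y hXY
    obtain ⟨w, huw, hwu, hwu'⟩ := isUnit_inv_pair hu
    rcases irredOf_factor_assoc 0 hirr (show p = (u * q₁) * q₂ by rw [hpe]; ring) with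
      hc1 | hc2
    · obtain ⟨⟨α, -, hα⟩, ⟨β, -, hβ⟩⟩ := hc1
      rw [smul_eq_mul] at hα hβ
      refine Or.inl (H.ascent_assoc hV₁u hX (α := α * u) (β := w * β) ?_ ?_)
      · rw [hα]; ring
      · calc q₁ = (w * u) * q₁ := by rw [hwu, one_mul]
        _ = w * (u * q₁) := by ring
        _ = w * (β * p) := by rw [hβ]
        _ = (w * β) * p := by ring
    · obtain ⟨⟨α, -, hα⟩, ⟨β, -, hβ⟩⟩ := hc2
      rw [smul_eq_mul] at hα hβ
      exact Or.inr (H.ascent_assoc hV₂u hY hα hβ)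
  · refine ⟨hnon, fun X Y hXY => ?_⟩
    obtain ⟨u, s₁, s₂, q₁, q₂, V₁, V₂, d₁, d₂, hu, hs₁, hs₂, hq₁, hq₂, hq₁S', hq₂S',
      hpe, hV₁r, hV₂r, hV₁u, hV₂u, hX, hY⟩ := main X Y hXY
    rcases hirr.2 _ _ (show p = (u * q₁) * q₂ by rw [hpe]; ring) with
      ⟨v, hv, -, hα⟩ | ⟨v, hv, -, hα⟩
    · rw [smul_eq_mul] at hα
      exact Or.inl (H.ascent_strong hV₁u hX (hv.mul hu) (by rw [hα]; ring))
    · rw [smul_eq_mul] at hα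
      exact Or.inr (H.ascent_strong hV₂u hY hv hα)
  · refine ⟨hnon, fun X Y hXY => ?_⟩
    obtain ⟨u, s₁, s₂, q₁, q₂, V₁, V₂, d₁, d₂, hu, hs₁, hs₂, hq₁, hq₂, hq₁S', hq₂S',
      hpe, hV₁r, hV₂r, hV₁u, hV₂u, hX, hY⟩ := main X Y hXY
    obtain ⟨w, huw, hwu, hwu'⟩ := isUnit_inv_pair hu
    have hp0 : p ≠ 0 := fun h => hpann (h ▸ H.zero_ann)
    rcases hirr.2 _ _ (show p = (u * q₁) * q₂ by rw [hpe]; ring) with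
      ⟨hSA, hrest⟩ | ⟨hSA, hrest⟩
    · obtain ⟨⟨α, -, hα⟩, ⟨β, -, hβ⟩⟩ := hSA
      rw [smul_eq_mul] at hα hβ
      have hallq : ∀ σ : R, p = σ * q₁ → IsUnit σ := by
        intro σ hσ
        rcases hrest with ⟨hpz, -⟩ | hall
        · exact absurd hpz hp0
        · have := hall (σ * w) (Set.mem_univ _) (by
            rw [smul_eq_mul]
            calc p = σ * q₁ := hσ
            _ = (σ * (w * u)) * q₁ := by rw [hwu, mul_one]
            _ = σ * w * (u * q₁) := by ring)
          exact isUnit_of_mul_isUnit_left this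
      refine Or.inl ⟨?_, Or.inr ?_⟩
      · refine H.ascent_assoc hV₁u hX (α := α * u) (β := w * β) ?_ ?_
        · rw [hα]; ring
        · calc q₁ = (w * u) * q₁ := by rw [hwu, one_mul]
          _ = w * (u * q₁) := by ring
          _ = w * (β * p) := by rw [hβ]
          _ = (w * β) * p := by ring
      · intro Ξ _ hΞ
        rw [smul_eq_mul] at hΞ
        exact H.ascent_vsa_core hp hpann hpS' hq₁ hallq hV₁r hs₁ hX Ξ hΞ
    · obtain ⟨⟨α, -, hα⟩, ⟨β, -, hβ⟩⟩ := hSA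
      rw [smul_eq_mul] at hα hβ
      have hallq : ∀ σ : R, p = σ * q₂ → IsUnit σ := by
        intro σ hσ
        rcases hrest with ⟨hpz, -⟩ | hall
        · exact absurd hpz hp0
        · exact hall σ (Set.mem_univ _) (by rw [smul_eq_mul]; exact hσ)
      refine Or.inr ⟨?_, Or.inr ?_⟩
      · exact H.ascent_assoc hV₂u hY hα hβ
      · intro Ξ _ hΞ
        rw [smul_eq_mul] at hΞ
        exact H.ascent_vsa_core hp hpann hpS' hq₂ hallq hV₂r hs₂ hY Ξ hΞ


/-- T2 extraction -/
theorem t2_main {n : M} (hn0 : n ≠ 0) (hnprim : SPrimitive S n) {g : R} (hg : g ∈ S')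
    {δ : H.satS.submonoid} {x : M} {τ : H.satS.submonoid}
    (heq : LocalizedModule.mk n (1 : H.satS.submonoid) =
      Localization.mk g δ • LocalizedModule.mk x τ) :
    ∃ (e u q : R) (v : M), e ∈ S ∧ IsUnit u ∧ SPrimitive S q ∧ q ∈ S' ∧ SPrimitive S v ∧
      v ≠ 0 ∧ x = e • v ∧ n = (u * q) • v := by
  rw [LocalizedModule.mk_smul_mk] at heq
  obtain ⟨c, hc, he⟩ := H.mkM_eq_exists heq
  push_cast at he
  rw [mul_one] at he
  have hx0 : x ≠ 0 := by
    rintro rfl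
    rw [smul_zero, smul_zero] at he
    exact H.smul_ne (H.mulS hc (H.mulS δ.2 τ.2)) hn0 he
  obtain ⟨e, heS, v, hv, hev⟩ := H.h1 hx0
  have hz : (c * (↑δ * ↑τ)) • n ≠ 0 := H.smul_ne (H.mulS hc (H.mulS δ.2 τ.2)) hn0
  have ez' : (c * (↑δ * ↑τ)) • n = ((c * g) * e) • v := by
    rw [he, hev, smul_smul, smul_smul, mul_assoc]
  have hG : (c * g) * e ∈ S' := H.mulS' (H.mulS' (H.sub hc) hg) (H.sub heS)
  obtain ⟨u, q, hu, hq, hqS', -, hnu⟩ := H.e2 hz (H.mulS hc (H.mulS δ.2 τ.2)) hG hnprim hv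
    rfl ez'
  have hv0 : v ≠ 0 := by
    rintro rfl
    rw [smul_zero] at hnu
    exact hn0 hnu
  exact ⟨e, u, q, v, heS, hu, hq, hqS', hv, hv0, hev, hnu⟩

/-- T2 : flavored S'-primitivity transfers to T-primitivity in the localization. -/
theorem t2 {n : M} (hn0 : n ≠ 0) {k : Fin 3} (hk : PrimOf S' k n) :
    PrimOf (locT H.satS S') k (LocalizedModule.mk n (1 : H.satS.submonoid)) := by
  have hnprim : SPrimitive S n := H.prim_of_beta hn0 hk
  fin_cases k
  · intro Θ hΘ X hX
    obtain ⟨g, hg, δ, rfl⟩ := H.locT_rep hΘ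
    obtain ⟨x, τ, rfl⟩ := H.lm_surj X
    obtain ⟨e, u, q, v, heS, hu, hq, hqS', hv, hv0, hev, hnu⟩ := H.t2_main hn0 hnprim hg hX
    obtain ⟨⟨σ₁, hσ₁, hv1⟩, -⟩ := hk (u * q) (H.mulS' (H.unit_mem' hu) hqS') v
      (by rw [hnu])
    refine ⟨⟨Localization.mk (e * σ₁) τ, H.mk_mem_locT (H.mulS' (H.sub heS) hσ₁) τ, ?_⟩,
      ⟨Localization.mk g δ, H.mk_mem_locT hg δ, hX⟩⟩
    rw [LocalizedModule.mk_smul_mk, mul_one, hev, hv1, smul_smul]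
  · intro Θ hΘ X hX
    obtain ⟨g, hg, δ, rfl⟩ := H.locT_rep hΘ
    obtain ⟨x, τ, rfl⟩ := H.lm_surj X
    obtain ⟨e, u, q, v, heS, hu, hq, hqS', hv, hv0, hev, hnu⟩ := H.t2_main hn0 hnprim hg hX
    obtain ⟨U, hUu, hUS', hv1⟩ := hk (u * q) (H.mulS' (H.unit_mem' hu) hqS') v
      (by rw [hnu])
    refine ⟨Localization.mk (e * U) τ, (H.unit_mk).2 (H.mulS heS (H.unit_mem hUu)),
      H.mk_mem_locT (H.sub (H.mulS heS (H.unit_mem hUu))) τ, ?_⟩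
    rw [LocalizedModule.mk_smul_mk, mul_one, hev, hv1, smul_smul]
  · intro Θ hΘ X hX
    obtain ⟨g, hg, δ, rfl⟩ := H.locT_rep hΘ
    obtain ⟨x, τ, rfl⟩ := H.lm_surj X
    obtain ⟨e, u, q, v, heS, hu, hq, hqS', hv, hv0, hev, hnu⟩ := H.t2_main hn0 hnprim hg hX
    obtain ⟨hSA, hrest⟩ := hk (u * q) (H.mulS' (H.unit_mem' hu) hqS') v (by rw [hnu])
    constructor
    · obtain ⟨⟨σ₁, hσ₁, hv1⟩, -⟩ := hSA
      refine ⟨⟨Localization.mk (e * σ₁) τ, H.mk_mem_locT (H.mulS' (H.sub heS) hσ₁) τ, ?_⟩,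
        ⟨Localization.mk g δ, H.mk_mem_locT hg δ, hX⟩⟩
      rw [LocalizedModule.mk_smul_mk, mul_one, hev, hv1, smul_smul]
    · refine Or.inr ?_
      intro Θ' hΘ' hX'
      obtain ⟨h₁, hh₁, ρ, rfl⟩ := H.locT_rep hΘ'
      rw [LocalizedModule.mk_smul_mk, mul_one] at hX'
      obtain ⟨c', hc', he'⟩ := H.mkM_eq_exists hX'
      push_cast at he'
      have hz' : ((c' * ↑ρ) * e) • v ≠ 0 := H.smul_ne (H.mulS (H.mulS hc' ρ.2) heS) hv0
      have ez : ((c' * ↑ρ) * e) • v = ((c' * ↑τ) * h₁) • n := by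
        rw [mul_smul, ← hev, he', smul_smul]
      have hGS' : (c' * ↑τ) * h₁ ∈ S' := H.mulS' (H.sub (H.mulS hc' τ.2)) hh₁
      obtain ⟨u₂, q₂, hu₂, hq₂, hq₂S', hGe, hveq⟩ := H.e2 hz' (H.mulS (H.mulS hc' ρ.2) heS)
        hGS' hv hnprim rfl ez
      rcases hrest with ⟨-, hn0'⟩ | hall
      · exact absurd hn0' hn0
      · have := hall (u₂ * q₂) (H.mulS' (H.unit_mem' hu₂) hq₂S') hveq
        have hq₂u : IsUnit q₂ := isUnit_of_mul_isUnit_right this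
        have hGS : (c' * ↑τ) * h₁ ∈ S := by
          rw [hGe]
          exact H.mulS (H.mulS (H.unit_mem hu₂) (H.mulS (H.mulS hc' ρ.2) heS))
            (H.unit_mem hq₂u)
        exact (H.unit_mk).2 (H.satr hGS)

/-- T3 extraction, weak form -/
theorem t3_extract {n v : M} (hn0 : n ≠ 0) (hv : SPrimitive S v) {g₁ : R}
    {δ₁ : H.satS.submonoid} (hg₁ : g₁ ∈ S')
    (hφ : LocalizedModule.mk n (1 : H.satS.submonoid) =
      Localization.mk g₁ δ₁ • LocalizedModule.mk v 1) :
    ∃ e' u q : R, e' ∈ S ∧ IsUnit u ∧ SPrimitive S q ∧ q ∈ S' ∧ n = (e' * (u * q)) • v := by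
  rw [LocalizedModule.mk_smul_mk, mul_one] at hφ
  obtain ⟨c, hc, he⟩ := H.mkM_eq_exists hφ
  push_cast at he
  rw [mul_one] at he
  obtain ⟨e', he'S, n', hn', hen⟩ := H.h1 hn0
  have hz : ((c * ↑δ₁) * e') • n' ≠ 0 := by
    rw [← smul_smul, ← hen]
    exact H.smul_ne (H.mulS hc δ₁.2) hn0
  have ez' : ((c * ↑δ₁) * e') • n' = (c * g₁) • v := by
    rw [← smul_smul, ← hen, he, smul_smul]
  have hG : c * g₁ ∈ S' := H.mulS' (H.sub hc) hg₁
  obtain ⟨u, q, hu, hq, hqS', -, hne⟩ := H.e2 hz (H.mulS (H.mulS hc δ₁.2) he'S) hG hn' hv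
    rfl ez'
  refine ⟨e', u, q, he'S, hu, hq, hqS', ?_⟩
  rw [hen, hne, smul_smul]

/-- T3 extraction, strong form (numerator in S) -/
theorem t3_extract_strong {n v : M} (hn0 : n ≠ 0) (hv : SPrimitive S v) {g₁ : R}
    {δ₁ : H.satS.submonoid} (hg₁ : g₁ ∈ S)
    (hφ : LocalizedModule.mk n (1 : H.satS.submonoid) =
      Localization.mk g₁ δ₁ • LocalizedModule.mk v 1) :
    ∃ e' r : R, e' ∈ S ∧ IsUnit r ∧ n = (e' * r) • v := by
  rw [LocalizedModule.mk_smul_mk, mul_one] at hφ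
  obtain ⟨c, hc, he⟩ := H.mkM_eq_exists hφ
  push_cast at he
  rw [mul_one] at he
  obtain ⟨e', he'S, n', hn', hen⟩ := H.h1 hn0
  have hz : (c * ↑δ₁) • n ≠ 0 := H.smul_ne (H.mulS hc δ₁.2) hn0
  have ez : (c * ↑δ₁) • n = ((c * ↑δ₁) * e') • n' := by rw [hen, smul_smul]
  have ez' : (c * ↑δ₁) • n = (c * g₁) • v := by rw [he, smul_smul]
  obtain ⟨r, hr, -, hn'r⟩ := H.engine hz (H.mulS (H.mulS hc δ₁.2) he'S) (H.mulS hc hg₁)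
    hn' hv ez ez'
  exact ⟨e', r, he'S, hr, by rw [hen, hn'r, smul_smul]⟩

/-- T3 : T-primitivity of a unit multiple of `mk v 1` gives flavored S'-primitivity of `v`. -/
theorem t3 {v : M} (hv0 : v ≠ 0) (hv : SPrimitive S v) {W : Localization H.satS.submonoid}
    (hW : IsUnit W) {k : Fin 3}
    (hk : PrimOf (locT H.satS S') k (W • LocalizedModule.mk v (1 : H.satS.submonoid))) :
    PrimOf S' k v := by
  obtain ⟨w₁, w₂, hWrep⟩ := H.loc_surj W
  have hw₁S : w₁ ∈ S := (H.unit_mk).1 (hWrep ▸ hW)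
  obtain ⟨Wi, hWWi, hWiW, hWiu⟩ := isUnit_inv_pair hW
  fin_cases k
  · intro s' hs' n hvn
    have hn0 : n ≠ 0 := by rintro rfl; rw [smul_zero] at hvn; exact hv0 hvn
    have hsm : (Localization.mk s' 1 : Localization H.satS.submonoid) •
        LocalizedModule.mk n (1 : H.satS.submonoid) = LocalizedModule.mk v 1 := by
      rw [LocalizedModule.mk_smul_mk, ← hvn, mul_one]
    have hX₁n : W • LocalizedModule.mk v (1 : H.satS.submonoid) =
        (W * Localization.mk s' 1) • LocalizedModule.mk n 1 := by
      rw [mul_smul, hsm]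
    have hmemT : W * Localization.mk s' 1 ∈ locT H.satS S' :=
      H.locT_mul (H.unit_mem_locT hW) (H.mk_mem_locT hs' 1)
    obtain ⟨⟨Θ₁, hΘ₁T, hφ⟩, -⟩ := hk _ hmemT _ hX₁n
    obtain ⟨g₁, hg₁, δ₁, rfl⟩ := H.locT_rep hΘ₁T
    have hφ2 : LocalizedModule.mk n (1 : H.satS.submonoid) =
        Localization.mk (g₁ * w₁) (δ₁ * w₂) • LocalizedModule.mk v 1 := by
      rw [hφ, ← mul_smul, hWrep, Localization.mk_mul]
    obtain ⟨e', u, q, he'S, hu, hq, hqS', hne⟩ :=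
      H.t3_extract hn0 hv (H.mulS' hg₁ (H.sub hw₁S)) hφ2
    exact ⟨⟨e' * (u * q), H.mulS' (H.sub he'S) (H.mulS' (H.unit_mem' hu) hqS'), hne⟩,
      ⟨s', hs', hvn⟩⟩
  · intro s' hs' n hvn
    have hn0 : n ≠ 0 := by rintro rfl; rw [smul_zero] at hvn; exact hv0 hvn
    have hsm : (Localization.mk s' 1 : Localization H.satS.submonoid) •
        LocalizedModule.mk n (1 : H.satS.submonoid) = LocalizedModule.mk v 1 := by
      rw [LocalizedModule.mk_smul_mk, ← hvn, mul_one]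
    have hX₁n : W • LocalizedModule.mk v (1 : H.satS.submonoid) =
        (W * Localization.mk s' 1) • LocalizedModule.mk n 1 := by
      rw [mul_smul, hsm]
    have hmemT : W * Localization.mk s' 1 ∈ locT H.satS S' :=
      H.locT_mul (H.unit_mem_locT hW) (H.mk_mem_locT hs' 1)
    obtain ⟨𝒰, h𝒰u, h𝒰T, hφ⟩ := hk _ hmemT _ hX₁n
    obtain ⟨g₁, δ₁, rfl⟩ := H.loc_surj 𝒰
    have hg₁S : g₁ ∈ S := (H.unit_mk).1 h𝒰u
    have hφ2 : LocalizedModule.mk n (1 : H.satS.submonoid) =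
        Localization.mk (g₁ * w₁) (δ₁ * w₂) • LocalizedModule.mk v 1 := by
      rw [hφ, ← mul_smul, hWrep, Localization.mk_mul]
    obtain ⟨e', r, he'S, hr, hner⟩ :=
      H.t3_extract_strong hn0 hv (H.mulS hg₁S hw₁S) hφ2
    have hvE : v = e' • ((s' * r) • v) := by
      conv_lhs => rw [hvn, hner]
      rw [smul_smul, smul_smul]
      congr 1
      ring
    have hue' : IsUnit e' := H.e1 hv hv0 he'S hvE
    exact ⟨e' * r, hue'.mul hr, H.unit_mem' (hue'.mul hr), hner⟩
  · intro s' hs' n hvn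
    have hn0 : n ≠ 0 := by rintro rfl; rw [smul_zero] at hvn; exact hv0 hvn
    have hsm : (Localization.mk s' 1 : Localization H.satS.submonoid) •
        LocalizedModule.mk n (1 : H.satS.submonoid) = LocalizedModule.mk v 1 := by
      rw [LocalizedModule.mk_smul_mk, ← hvn, mul_one]
    have hX₁n : W • LocalizedModule.mk v (1 : H.satS.submonoid) =
        (W * Localization.mk s' 1) • LocalizedModule.mk n 1 := by
      rw [mul_smul, hsm]
    have hmemT : W * Localization.mk s' 1 ∈ locT H.satS S' :=
      H.locT_mul (H.unit_mem_locT hW) (H.mk_mem_locT hs' 1)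
    obtain ⟨hSA, hrest⟩ := hk _ hmemT _ hX₁n
    constructor
    · obtain ⟨⟨Θ₁, hΘ₁T, hφ⟩, -⟩ := hSA
      obtain ⟨g₁, hg₁, δ₁, rfl⟩ := H.locT_rep hΘ₁T
      have hφ2 : LocalizedModule.mk n (1 : H.satS.submonoid) =
          Localization.mk (g₁ * w₁) (δ₁ * w₂) • LocalizedModule.mk v 1 := by
        rw [hφ, ← mul_smul, hWrep, Localization.mk_mul]
      obtain ⟨e', u, q, he'S, hu, hq, hqS', hne⟩ :=
        H.t3_extract hn0 hv (H.mulS' hg₁ (H.sub hw₁S)) hφ2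
      exact ⟨⟨e' * (u * q), H.mulS' (H.sub he'S) (H.mulS' (H.unit_mem' hu) hqS'), hne⟩,
        ⟨s', hs', hvn⟩⟩
    · refine Or.inr ?_
      intro σ hσ hnσ
      have hσ1 : (Localization.mk σ 1 : Localization H.satS.submonoid) •
          LocalizedModule.mk v (1 : H.satS.submonoid) = LocalizedModule.mk n 1 := by
        rw [LocalizedModule.mk_smul_mk, ← hnσ, mul_one]
      have hφσ : LocalizedModule.mk n (1 : H.satS.submonoid) =
          (Localization.mk σ 1 * Wi) • (W • LocalizedModule.mk v (1 : H.satS.submonoid)) := by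
        rw [smul_smul, mul_assoc, mul_comm Wi W, hWWi, mul_one, hσ1]
      have hmemT' : Localization.mk σ 1 * Wi ∈ locT H.satS S' :=
        H.locT_mul (H.mk_mem_locT hσ 1) (H.unit_mem_locT hWiu)
      rcases hrest with ⟨hφn0, -⟩ | hall
      · exact absurd (H.mkM_zero hφn0) hn0
      · have hu := hall _ hmemT' hφσ
        have hσu : IsUnit (Localization.mk σ (1 : H.satS.submonoid)) :=
          isUnit_of_mul_isUnit_left hu
        have hσS : σ ∈ S := (H.unit_mk).1 hσu
        have hvE : v = σ • (s' • v) := by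
          conv_lhs => rw [hvn, hnσ]
          rw [smul_smul, smul_smul]
          congr 1
          ring
        exact H.e1 hv hv0 hσS hvE

theorem hsm (r : R) (m : M) :
    LocalizedModule.mk (r • m) (1 : H.satS.submonoid) =
      Localization.mk r (1 : H.satS.submonoid) • LocalizedModule.mk m (1 : H.satS.submonoid) := by
  rw [LocalizedModule.mk_smul_mk, mul_one]

/-- conversion of an S'-factorization into an S-factorization with primitive tail -/
theorem conv1 (kα : Fin 3) : ∀ (l : List R), (∀ a ∈ l, a ∈ S' ∧ ¬ IsUnit a ∧ IrredOf kα a) →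
    ∀ n : M, SPrimitive S n → l.prod • n ≠ 0 →
    ∃ (l₁ : List R) (n₁ : M), (∀ a ∈ l₁, a ∈ S ∧ ¬ IsUnit a ∧ IrredOf kα a) ∧
      SPrimitive S n₁ ∧ l.prod • n = l₁.prod • n₁ := by
  intro l
  induction l with
  | nil => exact fun _ n hn _ => ⟨[], n, by simp, hn, rfl⟩
  | cons a l ih =>
    intro hal n hn h0
    rw [List.prod_cons, mul_smul] at h0
    have hl0 : l.prod • n ≠ 0 := fun hh => h0 (by rw [hh, smul_zero])
    obtain ⟨l₁, n₁, hl₁, hn₁, heq⟩ := ih (fun b hb => hal b (List.mem_cons_of_mem a hb)) n hn hl0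
    obtain ⟨haS', hanu, hairr⟩ := hal a (List.mem_cons_self (a := a) (l := l))
    by_cases haS : a ∈ S
    · refine ⟨a :: l₁, n₁, ?_, hn₁, ?_⟩
      · intro b hb
        rcases List.mem_cons.1 hb with rfl | hb
        exacts [⟨haS, hanu, hairr⟩, hl₁ b hb]
      · rw [List.prod_cons, List.prod_cons, mul_smul, mul_smul, heq]
    · have hann : a ∉ AnnSet R M := fun hA => h0 (by rw [hA])
      obtain ⟨t, q, htu, hE, hqprim, hqS', hqS, hqann, hqnu, hqirr⟩ :=
        H.lemmaE haS' hann haS hairr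
      have han₁0 : a • n₁ ≠ 0 := by
        intro hh
        apply h0
        rw [heq, smul_smul, mul_comm, ← smul_smul, hh, smul_zero]
      have hprim : SPrimitive S (a • n₁) := by
        have hq1 : q • n₁ ≠ 0 := by
          intro hh
          apply han₁0
          rw [hE, mul_smul, hh, smul_zero]
        have := sprim_unit_smul H.satS.2.1 (fun w hw => H.unit_mem hw) htu
          (H.h3 hqprim hn₁ hq1)
        rw [smul_smul, ← hE] at this
        exact this
      refine ⟨l₁, a • n₁, hl₁, hprim, ?_⟩
      rw [List.prod_cons, mul_smul, heq, smul_smul, mul_comm, ← smul_smul]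

/-- conversion of an S'-factorization into a T-factorization of the image -/
theorem conv2 (kα : Fin 3) : ∀ (l : List R), (∀ a ∈ l, a ∈ S' ∧ ¬ IsUnit a ∧ IrredOf kα a) →
    ∀ n : M, l.prod • n ≠ 0 →
    ∃ (L : List (Localization H.satS.submonoid)) (W : Localization H.satS.submonoid),
      IsUnit W ∧ (∀ A ∈ L, A ∈ locT H.satS S' ∧ ¬ IsUnit A ∧ IrredOf kα A) ∧
      LocalizedModule.mk (l.prod • n) (1 : H.satS.submonoid) =
        L.prod • (W • LocalizedModule.mk n 1) := by
  intro l
  induction l with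
  | nil =>
    refine fun _ n _ => ⟨[], 1, isUnit_one, by simp, ?_⟩
    rw [List.prod_nil, List.prod_nil, one_smul, one_smul, one_smul]
  | cons a l ih =>
    intro hal n h0
    rw [List.prod_cons, mul_smul] at h0
    have hl0 : l.prod • n ≠ 0 := fun hh => h0 (by rw [hh, smul_zero])
    obtain ⟨L, W, hWu, hLent, heq⟩ := ih (fun b hb => hal b (List.mem_cons_of_mem a hb)) n hl0
    obtain ⟨haS', hanu, hairr⟩ := hal a (List.mem_cons_self (a := a) (l := l))
    have hstep : LocalizedModule.mk ((a :: l).prod • n) (1 : H.satS.submonoid) =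
        Localization.mk a (1 : H.satS.submonoid) • (L.prod • (W • LocalizedModule.mk n 1)) := by
      rw [List.prod_cons, mul_smul, H.hsm, heq]
    by_cases haS : a ∈ S
    · refine ⟨L, Localization.mk a 1 * W, ((H.unit_mk).2 haS).mul hWu, hLent, ?_⟩
      rw [hstep]
      simp only [smul_smul]
      congr 1
      ring
    · have hann : a ∉ AnnSet R M := fun hA => h0 (by rw [hA])
      obtain ⟨t, q, htu, hE, hqprim, hqS', hqS, hqann, hqnu, hqirr⟩ :=
        H.lemmaE haS' hann haS hairr
      refine ⟨Localization.mk q 1 :: L, Localization.mk t 1 * W,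
        ((H.unit_mk).2 (H.unit_mem htu)).mul hWu, ?_, ?_⟩
      · intro B hB
        rcases List.mem_cons.1 hB with rfl | hB
        · exact ⟨H.mk_mem_locT hqS' 1, fun h => hqS ((H.unit_mk).1 h),
            H.irr_ascent hqprim hqS' hqS hqann hqirr⟩
        · exact hLent B hB
      · rw [hstep, List.prod_cons]
        simp only [smul_smul]
        congr 1
        rw [show Localization.mk a (1 : H.satS.submonoid) =
          Localization.mk t 1 * Localization.mk q 1 by rw [H.mk_mul_one, ← hE]]
        ring

/-- conversion of a T-factorization into a list of S-primitive irreducibles of R -/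
theorem conv3 (kα : Fin 3) : ∀ (L : List (Localization H.satS.submonoid)),
    (∀ A ∈ L, A ∈ locT H.satS S' ∧ ¬ IsUnit A ∧ IrredOf kα A) →
    ∀ X₀ : LocalizedModule H.satS.submonoid M, L.prod • X₀ ≠ 0 →
    ∃ (lp : List R) (W : Localization H.satS.submonoid), IsUnit W ∧
      (∀ p ∈ lp, p ∈ S' ∧ ¬ IsUnit p ∧ IrredOf kα p ∧ SPrimitive S p) ∧
      L.prod • X₀ = Localization.mk lp.prod (1 : H.satS.submonoid) • (W • X₀) := by
  intro L
  induction L with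
  | nil =>
    refine fun _ X₀ _ => ⟨[], 1, isUnit_one, by simp, ?_⟩
    rw [List.prod_nil, List.prod_nil, one_smul, Localization.mk_one, one_smul]
  | cons A L ih =>
    intro hAL X₀ h0
    rw [List.prod_cons, mul_smul] at h0
    have hL0 : L.prod • X₀ ≠ 0 := fun hh => h0 (by rw [hh, smul_zero])
    obtain ⟨lp, W, hWu, hlp, heq⟩ := ih (fun B hB => hAL B (List.mem_cons_of_mem A hB)) X₀ hL0
    obtain ⟨hAT, hAnu, hAirr⟩ := hAL A (List.mem_cons_self (a := A) (l := L))
    obtain ⟨aval, haS', σA, rfl⟩ := H.locT_rep hAT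
    have haS : aval ∉ S := fun h => hAnu ((H.unit_mk).2 h)
    have hann : aval ∉ AnnSet R M := by
      intro hA
      apply h0
      obtain ⟨w, t, hw⟩ := H.lm_surj (L.prod • X₀)
      rw [hw, LocalizedModule.mk_smul_mk, hA w, LocalizedModule.zero_mk]
    obtain ⟨sa, hsa, pa, hpaprim, hE⟩ := H.compactD haS' hann
    have hpaS' : pa ∈ S' := H.satr' (hE ▸ haS')
    have hpaS : pa ∉ S := fun h => haS (hE ▸ H.mulS hsa h)
    have hpann : pa ∉ AnnSet R M := fun h => hann (hE ▸ H.mul_ann_right h)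
    have hpanu : ¬ IsUnit pa := fun h => hpaS (H.unit_mem h)
    have hVAu : IsUnit (Localization.mk sa σA) := (H.unit_mk).2 hsa
    have hA_split : Localization.mk aval σA = Localization.mk sa σA * Localization.mk pa 1 := by
      rw [Localization.mk_mul, mul_one, ← hE]
    obtain ⟨VAi, hv1, hv2, hVAiu⟩ := isUnit_inv_pair hVAu
    have hpamk : Localization.mk pa (1 : H.satS.submonoid) = VAi * Localization.mk aval σA := by
      rw [hA_split, ← mul_assoc, hv2, one_mul]
    have hpairrmk : IrredOf kα (Localization.mk pa (1 : H.satS.submonoid)) := by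
      rw [hpamk]
      exact irredOf_unit_mul hVAiu kα hAirr
    have hpairr : IrredOf kα pa := H.irr_descent hpaprim hpaS' hpann hpairrmk
    refine ⟨pa :: lp, Localization.mk sa σA * W, hVAu.mul hWu, ?_, ?_⟩
    · intro b hb
      rcases List.mem_cons.1 hb with rfl | hb
      · exact ⟨hpaS', hpanu, hpairr, hpaprim⟩
      · exact hlp b hb
    · rw [List.prod_cons, mul_smul, heq, List.prod_cons, ← H.mk_mul_one]
      simp only [smul_smul]
      congr 1
      rw [hA_split]
      ring

end Hyp


end Statement10Aux

theorem statement10 {R : Type*} [CommRing R] {M : Type*} [AddCommGroup M] [Module R M]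
    [Nontrivial M] (S S' : Set R) (hS : Saturated S) (hS' : Saturated S') (hSS' : S ⊆ S')
    (hsplit : Splits S (Set.univ : Set M))
    (hcompact : CompactlySAtomic S (S' \ AnnSet R M))
    (hZM : S ∩ ZDiv R M = ∅) (hZR : S ∩ ZDiv R R = ∅) (kα kβ : Fin 3) :
    ABAtomicModule S' M kα kβ ↔
      (ABAtomicModule S M kα (0 : Fin 3) ∧
       ABAtomicModule (locT hS S') (LocalizedModule hS.submonoid M) kα kβ) := by
  have H : Hyp S S' M := ⟨hS, hS', hSS', hsplit, hcompact, hZM, hZR⟩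
  constructor
  · intro hS'atomic
    constructor
    · -- (α, primitive)-S-atomicity
      intro m hm
      obtain ⟨l, n, ⟨hent, hprod⟩, hirr, hbeta⟩ := hS'atomic m hm
      have h0 : l.prod • n ≠ 0 := by rw [← hprod]; exact hm
      have hn0 : n ≠ 0 := fun h => h0 (by rw [h, smul_zero])
      have hnprim : SPrimitive S n := H.prim_of_beta hn0 hbeta
      obtain ⟨l₁, n₁, hl₁, hn₁, heq⟩ := H.conv1 kα l
        (fun a ha => ⟨(hent a ha).1, (hent a ha).2, hirr a ha⟩) n hnprim h0
      exact ⟨l₁, n₁, ⟨fun s hs => ⟨(hl₁ s hs).1, (hl₁ s hs).2.1⟩, by rw [hprod, heq]⟩,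
        fun s hs => (hl₁ s hs).2.2, hn₁⟩
    · -- (α, β)-T-atomicity of the localization
      intro X hX
      obtain ⟨m₀, σ, rfl⟩ := H.lm_surj X
      have hm₀ : m₀ ≠ 0 := fun h => hX (by rw [h, LocalizedModule.zero_mk])
      obtain ⟨l, n, ⟨hent, hprod⟩, hirr, hbeta⟩ := hS'atomic m₀ hm₀
      have h0 : l.prod • n ≠ 0 := by rw [← hprod]; exact hm₀
      have hn0 : n ≠ 0 := fun h => h0 (by rw [h, smul_zero])
      obtain ⟨L, W, hWu, hLent, heq⟩ := H.conv2 kα l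
        (fun a ha => ⟨(hent a ha).1, (hent a ha).2, hirr a ha⟩) n h0
      have hXrw : LocalizedModule.mk m₀ σ =
          (Localization.mk 1 σ) • LocalizedModule.mk m₀ (1 : hS.submonoid) := by
        rw [LocalizedModule.mk_smul_mk, one_smul, mul_one]
      refine ⟨L, (Localization.mk 1 σ * W) • LocalizedModule.mk n (1 : hS.submonoid),
        ⟨fun A hA => ⟨(hLent A hA).1, (hLent A hA).2.1⟩, ?_⟩,
        fun A hA => (hLent A hA).2.2, ?_⟩
      · rw [hXrw, hprod, heq]
        simp only [smul_smul]
        congr 1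
        ring
      · exact primOf_unit_smul (fun x hx y hy => H.locT_mul hx hy)
          (fun v hv => H.unit_mem_locT hv) (((H.unit_mk).2 H.one_mem).mul hWu) kβ
          (H.t2 hn0 hbeta)
  · rintro ⟨hSat, hTat⟩
    intro m hm
    obtain ⟨la, n₀, ⟨haent, haprod⟩, hairr, hn₀prim'⟩ := hSat m hm
    have hn₀prim : SPrimitive S n₀ := hn₀prim'
    have h0 : la.prod • n₀ ≠ 0 := by rw [← haprod]; exact hm
    have hn₀0 : n₀ ≠ 0 := fun h => h0 (by rw [h, smul_zero])
    have hφ0 : LocalizedModule.mk n₀ (1 : hS.submonoid) ≠ 0 := fun h => hn₀0 (H.mkM_zero h)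
    obtain ⟨L, X, ⟨hLent, hLprod⟩, hLirr, hXprim⟩ := hTat _ hφ0
    have hL0 : L.prod • X ≠ 0 := by rw [← hLprod]; exact hφ0
    obtain ⟨lp, W, hWu, hlp, heq⟩ := H.conv3 kα L
      (fun A hA => ⟨(hLent A hA).1, (hLent A hA).2, hLirr A hA⟩) X hL0
    obtain ⟨x, τ, hXrep⟩ := H.lm_surj (W • X)
    have hkey : LocalizedModule.mk n₀ (1 : hS.submonoid) =
        LocalizedModule.mk (lp.prod • x) τ := by
      rw [hLprod, heq, hXrep, LocalizedModule.mk_smul_mk, one_mul]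
    obtain ⟨c, hc, he⟩ := H.mkM_eq_exists hkey
    push_cast at he
    rw [mul_one] at he
    have hx0 : x ≠ 0 := by
      rintro rfl
      rw [smul_zero, smul_zero] at he
      exact H.smul_ne (H.mulS hc τ.2) hn₀0 he
    obtain ⟨e, heS, v, hvprim, hev⟩ := H.h1 hx0
    have hv0 : v ≠ 0 := fun h => hx0 (by rw [hev, h, smul_zero])
    have hz : (c * ↑τ) • n₀ ≠ 0 := H.smul_ne (H.mulS hc τ.2) hn₀0
    have ez' : (c * ↑τ) • n₀ = (c * e) • (lp.prod • v) := by
      rw [he, hev]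
      simp only [smul_smul]
      congr 1
      ring
    have hPv0 : lp.prod • v ≠ 0 := by
      intro hh
      apply hz
      rw [ez', hh, smul_zero]
    have hPvprim : SPrimitive S (lp.prod • v) :=
      H.prodPrim (fun p hp => (hlp p hp).2.2.2) hvprim hPv0
    obtain ⟨u₀, hu₀, -, hn₀e⟩ := H.engine hz (H.mulS hc τ.2) (H.mulS hc heS) hn₀prim
      hPvprim rfl ez'
    have hWX : W • X = Localization.mk e τ • LocalizedModule.mk v (1 : hS.submonoid) := by
      rw [hXrep, hev, LocalizedModule.mk_smul_mk, mul_one]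
    have hprimWX : PrimOf (locT hS S') kβ
        (Localization.mk e τ • LocalizedModule.mk v (1 : hS.submonoid)) := by
      rw [← hWX]
      exact primOf_unit_smul (fun a ha b hb => H.locT_mul ha hb)
        (fun w hw => H.unit_mem_locT hw) hWu kβ hXprim
    have hvS' : PrimOf S' kβ v := H.t3 hv0 hvprim ((H.unit_mk).2 heS) hprimWX
    have hnf : PrimOf S' kβ (u₀ • v) :=
      primOf_unit_smul H.satS'.2.1 (fun w hw => H.unit_mem' hw) hu₀ kβ hvS'
    refine ⟨la ++ lp, u₀ • v, ⟨?_, ?_⟩, ?_, hnf⟩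
    · intro s hs
      rcases List.mem_append.1 hs with h | h
      · exact ⟨hSS' (haent s h).1, (haent s h).2⟩
      · exact ⟨(hlp s h).1, (hlp s h).2.1⟩
    · rw [haprod, hn₀e, List.prod_append]
      simp only [smul_smul]
      congr 1
      ring
    · intro s hs
      rcases List.mem_append.1 hs with h | h
      · exact hairr s h
      · exact (hlp s h).2.2.1


end FactorizationPaper
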